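/- arXiv:2206.01565 — 6 statements merged into one kernel-verified Lean document; each statement's English description precedes it below -/
import Mathlib

section
/- Let 1 ≤ m ≤ n be integers and let f : ℝ_+^n → ℝ be m-times continuously differentiable (i.e., f extends to a C^m function on an open neighborhood of ℝ_+^n). Then f is m-supermodular if and only if for every choice of pairwise distinct indices i_1, …, i_m ∈ {1, …, n} and every x ∈ ℝ_+^n, the mixed partial derivative ∂^m f / ∂x_{i_1} ⋯ ∂x_{i_m}(x) is nonnegative. -/
open MeasureTheory

/-- A function `f` on `ℝ^n` is `m`-supermodular (on the nonnegative orthant) if for every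
`x₀ ≥ 0` and all `x₁, …, x_m ≥ 0` with pairwise disjoint supports one has
`∑_{I ⊆ [m]} (-1)^{m - #I} f(x₀ ∨ ⋁_{i ∈ I} x_i) ≥ 0`. -/
def MSupermodular (n m : ℕ) (f : (Fin n → ℝ) → ℝ) : Prop :=
  ∀ x₀ : Fin n → ℝ, 0 ≤ x₀ →
    ∀ x : Fin m → (Fin n → ℝ), (∀ i, 0 ≤ x i) →
      (∀ i j, i ≠ j → x i ⊓ x j = 0) →
        0 ≤ ∑ I : Finset (Fin m), (-1 : ℝ) ^ (m - I.card) * f (I.fold (· ⊔ ·) x₀ x)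

section SuperAuxiliary

open Set

section Aux

set_option linter.unusedSectionVars false

variable {E F : Type*} [NormedAddCommGroup E] [NormedSpace ℝ E]
  [NormedAddCommGroup F] [NormedSpace ℝ F]

/-- Iterated difference operator along a list of directions. -/
noncomputable def dList : List E → (E → F) → (E → F)
  | [], g => g
  | v :: l, g => dList l (fun y => g (y + v) - g y)

/-- Iterated directional derivative along a list of directions. -/
noncomputable def itD : List E → (E → F) → (E → F)
  | [], g => g
  | v :: l, g => itD l (fun y => fderiv ℝ g y v)

/-- The "box" spanned by a list of directions based at `x`. -/
def segPts : List E → E → Set E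
  | [], x => {x}
  | v :: l, x => ⋃ s ∈ Set.Icc (0:ℝ) 1, segPts l (x + s • v)

@[simp] lemma dList_nil (g : E → F) : dList [] g = g := rfl
lemma dList_cons (v : E) (l : List E) (g : E → F) :
    dList (v :: l) g = dList l (fun y => g (y + v) - g y) := rfl
@[simp] lemma itD_nil (g : E → F) : itD [] g = g := rfl
lemma itD_cons (v : E) (l : List E) (g : E → F) :
    itD (v :: l) g = itD l (fun y => fderiv ℝ g y v) := rfl
@[simp] lemma segPts_nil (x : E) : segPts [] x = {x} := rfl
lemma segPts_cons (v : E) (l : List E) (x : E) :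
    segPts (v :: l) x = ⋃ s ∈ Set.Icc (0:ℝ) 1, segPts l (x + s • v) := rfl

lemma segPts_translate {l : List E} {z : E} (w : E) :
    ∀ {x : E}, z ∈ segPts l x → z + w ∈ segPts l (x + w) := by
  induction l with
  | nil => intro x hz; simp only [segPts_nil, mem_singleton_iff] at hz ⊢; rw [hz]
  | cons v l ih =>
    intro x hz
    simp only [segPts_cons, mem_iUnion] at hz ⊢
    obtain ⟨s, hs, hz⟩ := hz
    exact ⟨s, hs, by rw [add_right_comm]; exact ih hz⟩

lemma mem_segPts_of_mem_icc {l : List E} {v x : E} {z : E} {s : ℝ}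
    (hs : s ∈ Set.Icc (0:ℝ) 1) (hz : z ∈ segPts l (x + s • v)) : z ∈ segPts (v :: l) x := by
  simp only [segPts_cons, mem_iUnion]
  exact ⟨s, hs, hz⟩

lemma mem_segPts_of_mem_cons_zero {l : List E} {v x : E} {z : E}
    (hz : z ∈ segPts l x) : z ∈ segPts (v :: l) x :=
  mem_segPts_of_mem_icc ⟨le_refl 0, zero_le_one⟩ (by rwa [zero_smul, add_zero])

lemma mem_segPts_of_mem_cons_one {l : List E} {v x : E} {z : E}
    (hz : z ∈ segPts l (x + v)) : z ∈ segPts (v :: l) x :=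
  mem_segPts_of_mem_icc ⟨zero_le_one, le_refl 1⟩ (by rwa [one_smul])

lemma self_mem_segPts (l : List E) (x : E) : x ∈ segPts l x := by
  induction l generalizing x with
  | nil => simp
  | cons v l ih => exact mem_segPts_of_mem_cons_zero (ih x)

lemma dList_shift (l : List E) (g : E → F) (v : E) (x : E) :
    dList l (fun y => g (y + v)) x = dList l g (x + v) := by
  induction l generalizing g x with
  | nil => simp
  | cons w l ih =>
    rw [dList_cons, dList_cons]
    have h1 : (fun y => g (y + w + v) - g (y + v))
        = fun y => (fun z => g (z + w) - g z) (y + v) := by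
      funext y; simp only; rw [add_right_comm y w v]
    rw [h1, ih (fun z => g (z + w) - g z) x]

lemma dList_sub (l : List E) (g h : E → F) (x : E) :
    dList l (fun y => g y - h y) x = dList l g x - dList l h x := by
  induction l generalizing g h x with
  | nil => simp
  | cons w l ih =>
    rw [dList_cons, dList_cons, dList_cons]
    have h1 : (fun y => (g (y + w) - h (y + w)) - (g y - h y))
        = fun y => (g (y + w) - g y) - (h (y + w) - h y) := by
      funext y; abel
    rw [h1, ih]

lemma dList_cons_eq (l : List E) (g : E → F) (v : E) (x : E) :
    dList (v :: l) g x = dList l g (x + v) - dList l g x := by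
  rw [dList_cons, dList_sub l (fun y => g (y + v)) g x, dList_shift]

end Aux

section Deriv

set_option linter.unusedSectionVars false

variable {E F : Type*} [NormedAddCommGroup E] [NormedSpace ℝ E]
  [NormedAddCommGroup F] [NormedSpace ℝ F]

lemma hasFDerivAt_dList (l : List E) (g : E → F) (g' : E → E →L[ℝ] F) (x : E)
    (h : ∀ z ∈ segPts l x, HasFDerivAt g (g' z) z) :
    HasFDerivAt (dList l g) (dList l g' x) x := by
  induction l generalizing g g' x with
  | nil =>
    exact h x (by simp)
  | cons v l ih =>
    rw [dList_cons, dList_cons]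
    apply ih
    intro z hz
    have h1 : HasFDerivAt (fun y => g (y + v)) (g' (z + v)) z := by
      have := (h (z + v) (mem_segPts_of_mem_cons_one (segPts_translate v hz))).comp z
        ((hasFDerivAt_id z).add_const v)
      exact this
    exact h1.sub (h z (mem_segPts_of_mem_cons_zero hz))

lemma dList_clm_apply (l : List E) (A : E → E →L[ℝ] F) (x v : E) :
    dList l (fun z => A z v) x = (dList l A x) v := by
  induction l generalizing A x with
  | nil => simp
  | cons w l ih =>
    rw [dList_cons, dList_cons]
    have h1 : (fun z => A (z + w) v - A z v) = fun z => (A (z + w) - A z) v := by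
      funext z; simp
    rw [h1, ih]

variable {U : Set E} (hU : IsOpen U)

include hU in
lemma exists_dList_eq_itD (l : List E) (g : E → ℝ) (x : E)
    (hg : ContDiffOn ℝ l.length g U) (hsub : segPts l x ⊆ U) :
    ∃ ξ ∈ segPts l x, dList l g x = itD l g ξ := by
  induction l generalizing g x with
  | nil => exact ⟨x, by simp, by simp⟩
  | cons v l ih =>
    have hg1 : ∀ z ∈ U, HasFDerivAt g (fderiv ℝ g z) z := by
      intro z hz
      have hd : DifferentiableOn ℝ g U := hg.differentiableOn (by
        simp only [List.length_cons]
        exact_mod_cast Nat.succ_ne_zero l.length)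
      exact (hd.differentiableAt (hU.mem_nhds hz)).hasFDerivAt
    -- the auxiliary function
    set h : E → ℝ := fun z => fderiv ℝ g z v with hh
    -- derivative of dList along the segment
    have key : ∀ s ∈ Set.Icc (0:ℝ) 1,
        HasDerivAt (fun t : ℝ => dList l g (x + t • v))
          (dList l h (x + s • v)) s := by
      intro s hs
      have hmem : ∀ z ∈ segPts l (x + s • v), HasFDerivAt g (fderiv ℝ g z) z := by
        intro z hz
        exact hg1 z (hsub (mem_segPts_of_mem_icc hs hz))
      have hD : HasFDerivAt (dList l g) (dList l (fderiv ℝ g) (x + s • v)) (x + s • v) :=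
        hasFDerivAt_dList l g (fderiv ℝ g) _ hmem
      have hline : HasDerivAt (fun t : ℝ => x + t • v) v s := by
        simpa using ((hasDerivAt_id s).smul_const v).const_add x
      have := hD.comp_hasDerivAt s hline
      rwa [← dList_clm_apply l (fderiv ℝ g) (x + s • v) v] at this
    -- MVT
    obtain ⟨c, hc, hceq⟩ := exists_hasDerivAt_eq_slope
      (fun t : ℝ => dList l g (x + t • v)) (fun s => dList l h (x + s • v))
      zero_lt_one
      (fun s hs => (key s hs).continuousAt.continuousWithinAt)
      (fun s hs => key s (Set.mem_Icc_of_Ioo hs))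
    have hcIcc : c ∈ Set.Icc (0:ℝ) 1 := Set.mem_Icc_of_Ioo hc
    have hstep : dList (v :: l) g x = dList l h (x + c • v) := by
      rw [dList_cons_eq, hceq]
      norm_num
    -- apply the inductive hypothesis to h at x + c • v
    have hhC : ContDiffOn ℝ l.length h U := by
      have h1 : ContDiffOn ℝ l.length (fun z => fderiv ℝ g z) U :=
        hg.fderiv_of_isOpen hU (by simp only [List.length_cons]; push_cast; norm_num)
      exact h1.clm_apply contDiffOn_const
    have hsub' : segPts l (x + c • v) ⊆ U := fun z hz =>
      hsub (mem_segPts_of_mem_icc hcIcc hz)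
    obtain ⟨ξ, hξ, hξeq⟩ := ih h (x + c • v) hhC hsub'
    exact ⟨ξ, mem_segPts_of_mem_icc hcIcc hξ, by rw [hstep, hξeq, itD_cons]⟩

end Deriv

section IT

set_option linter.unusedSectionVars false

variable {E : Type*} [NormedAddCommGroup E] [NormedSpace ℝ E]
variable {U : Set E} (hU : IsOpen U)

include hU in
lemma itD_eq_iteratedFDerivWithin : ∀ (k : ℕ) (u : Fin k → E) (g : E → ℝ),
    ContDiffOn ℝ k g U → ∀ y ∈ U,
    itD (List.ofFn u) g y = iteratedFDerivWithin ℝ k g U y (u ∘ Fin.rev) := by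
  intro k
  induction k with
  | zero =>
    intro u g hg y hy
    simp [List.ofFn_zero, iteratedFDerivWithin_zero_apply]
  | succ k ih =>
    intro u g hg y hy
    rw [List.ofFn_succ, itD_cons]
    have htail : ContDiffOn ℝ k (fun z => fderiv ℝ g z (u 0)) U := by
      have h1 : ContDiffOn ℝ k (fun z => fderiv ℝ g z) U :=
        hg.fderiv_of_isOpen hU (by push_cast; norm_num)
      exact h1.clm_apply contDiffOn_const
    rw [ih (fun i => u i.succ) (fun z => fderiv ℝ g z (u 0)) htail y hy]
    -- switch to fderivWithin
    have hcongr : Set.EqOn (fun z => fderiv ℝ g z (u 0))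
        (fun z => fderivWithin ℝ g U z (u 0)) U := by
      intro z hz
      simp only [fderivWithin_of_isOpen hU hz]
    rw [iteratedFDerivWithin_congr hcongr hy]
    -- apply the clm composition lemma
    have hfd : ContDiffOn ℝ k (fderivWithin ℝ g U) U :=
      hg.fderivWithin hU.uniqueDiffOn (by push_cast; norm_num)
    have hcomp : (fun z => fderivWithin ℝ g U z (u 0))
        = (ContinuousLinearMap.apply ℝ ℝ (u 0)) ∘ (fderivWithin ℝ g U) := by
      funext z; rfl
    rw [hcomp, ContinuousLinearMap.iteratedFDerivWithin_comp_left _ (hfd y hy) hU.uniqueDiffOn hy le_rfl]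
    rw [iteratedFDerivWithin_succ_apply_right hU.uniqueDiffOn hy (u ∘ Fin.rev)]
    have hlast : (u ∘ Fin.rev) (Fin.last k) = u 0 := by
      simp [Fin.rev_last]
    have hinit : Fin.init (u ∘ Fin.rev) = (fun i => u i.succ) ∘ Fin.rev := by
      funext i
      simp [Fin.init, Fin.rev_castSucc]
    rw [hlast, hinit]
    simp

end IT

section Comb

set_option linter.unusedSectionVars false

variable {ι : Type*} [DecidableEq ι]
variable {E : Type*} [NormedAddCommGroup E] [NormedSpace ℝ E]

lemma dList_map_eq_altSum (L : List ι) (hL : L.Nodup) (u : ι → E) (g : E → ℝ) (x : E) :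
    dList (L.map u) g x
      = ∑ I ∈ L.toFinset.powerset, (-1:ℝ)^(L.length - I.card) * g (x + ∑ i ∈ I, u i) := by
  induction L generalizing g with
  | nil => simp
  | cons a L ih =>
    obtain ⟨ha, hL'⟩ := List.nodup_cons.1 hL
    have haF : a ∉ L.toFinset := by simpa using ha
    rw [List.map_cons, dList_cons, ih hL', List.toFinset_cons,
      Finset.sum_powerset_insert haF, ← Finset.sum_add_distrib]
    apply Finset.sum_congr rfl
    intro I hI
    have hIsub : I ⊆ L.toFinset := Finset.mem_powerset.1 hI
    have hIa : a ∉ I := fun h => haF (hIsub h)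
    have hcard : I.card ≤ L.length := by
      have := Finset.card_le_card hIsub
      rwa [List.toFinset_card_of_nodup hL'] at this
    have h1 : L.length + 1 - I.card = (L.length - I.card) + 1 := by omega
    have h2 : (insert a I).card = I.card + 1 := Finset.card_insert_of_notMem hIa
    have h3 : L.length + 1 - (I.card + 1) = L.length - I.card := by omega
    rw [List.length_cons, h1, Finset.sum_insert hIa, h2, h3]
    have h4 : x + (u a + ∑ i ∈ I, u i) = x + ∑ i ∈ I, u i + u a := by abel
    rw [h4, pow_succ]
    ring

lemma dList_ofFn_eq_altSum {m : ℕ} (u : Fin m → E) (g : E → ℝ) (x : E) :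
    dList (List.ofFn u) g x
      = ∑ I : Finset (Fin m), (-1:ℝ)^(m - I.card) * g (x + ∑ i ∈ I, u i) := by
  rw [List.ofFn_eq_map, dList_map_eq_altSum _ (List.nodup_finRange m)]
  rw [List.toFinset_finRange, List.length_finRange, Finset.powerset_univ]

end Comb

section Pi

set_option linter.unusedSectionVars false

variable {E : Type*} [NormedAddCommGroup E] [NormedSpace ℝ E]

lemma norm_sub_le_of_mem_segPts {l : List E} :
    ∀ {x z : E}, z ∈ segPts l x → ‖z - x‖ ≤ (l.map norm).sum := by
  induction l with
  | nil =>
    intro x z hz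
    simp only [segPts_nil, mem_singleton_iff] at hz
    simp [hz]
  | cons v l ih =>
    intro x z hz
    simp only [segPts_cons, mem_iUnion] at hz
    obtain ⟨s, hs, hz⟩ := hz
    have h1 := ih hz
    have h2 : ‖z - x‖ ≤ ‖z - (x + s • v)‖ + ‖s • v‖ := by
      have : z - x = (z - (x + s • v)) + s • v := by abel
      rw [this]
      exact norm_add_le _ _
    have h3 : ‖s • v‖ ≤ ‖v‖ := by
      rw [norm_smul]
      calc ‖s‖ * ‖v‖ ≤ 1 * ‖v‖ := by
              apply mul_le_mul_of_nonneg_right _ (norm_nonneg v)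
              rw [Real.norm_eq_abs, abs_le]
              exact ⟨le_trans (by norm_num) hs.1, hs.2⟩
        _ = ‖v‖ := one_mul _
    simp only [List.map_cons, List.sum_cons]
    linarith

lemma segPts_nonneg {n : ℕ} {l : List (Fin n → ℝ)} (hl : ∀ v ∈ l, 0 ≤ v) :
    ∀ {x : Fin n → ℝ}, 0 ≤ x → ∀ z ∈ segPts l x, 0 ≤ z := by
  induction l with
  | nil =>
    intro x hx z hz
    simp only [segPts_nil, mem_singleton_iff] at hz
    rwa [hz]
  | cons v l ih =>
    intro x hx z hz
    simp only [segPts_cons, mem_iUnion] at hz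
    obtain ⟨s, hs, hz⟩ := hz
    have hv : (0:Fin n → ℝ) ≤ v := hl v (by simp)
    have hl' : ∀ w ∈ l, (0:Fin n → ℝ) ≤ w := fun w hw => hl w (by simp [hw])
    exact ih hl' (add_nonneg hx (smul_nonneg hs.1 hv)) z hz

lemma fold_sup_eq {n m : ℕ} (x₀ : Fin n → ℝ) (hx₀ : 0 ≤ x₀) (x : Fin m → Fin n → ℝ)
    (hx : ∀ i, 0 ≤ x i) (hd : ∀ i j, i ≠ j → x i ⊓ x j = 0) (I : Finset (Fin m)) :
    (I.fold (· ⊔ ·) x₀ x : Fin n → ℝ) = x₀ + ∑ i ∈ I, (x₀ ⊔ x i - x₀) := by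
  induction I using Finset.induction_on with
  | empty => simp
  | @insert i I hi ih =>
    rw [Finset.fold_insert hi, ih, Finset.sum_insert hi]
    funext c
    have hwsum : (0:ℝ) ≤ ∑ j ∈ I, (x₀ c ⊔ x j c - x₀ c) :=
      Finset.sum_nonneg fun j _ => sub_nonneg.2 le_sup_left
    simp only [Pi.sup_apply, Pi.add_apply, Pi.sub_apply, Finset.sum_apply]
    have hA : (0:ℝ) ≤ x₀ c := hx₀ c
    have hB : (0:ℝ) ≤ x i c := hx i c
    by_cases hb : x i c = 0
    · rw [hb, sup_eq_right.2 (add_nonneg hA hwsum), sup_eq_left.2 hA]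
      ring
    · have hxj : ∀ j ∈ I, x j c = 0 := by
        intro j hj
        have hij : i ≠ j := fun h => hi (h ▸ hj)
        have hthis := congrFun (hd i j hij) c
        simp only [Pi.inf_apply, Pi.zero_apply] at hthis
        have hmin : min (x i c) (x j c) = 0 := hthis
        rcases le_total (x i c) (x j c) with h | h
        · exact absurd (by rwa [min_eq_left h] at hmin) hb
        · rwa [min_eq_right h] at hmin
      have hS : ∑ j ∈ I, (x₀ c ⊔ x j c - x₀ c) = 0 := by
        apply Finset.sum_eq_zero
        intro j hj
        rw [hxj j hj, sup_eq_left.2 hA]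
        ring
      rw [hS, add_zero, add_zero, sup_comm (x₀ c) (x i c)]
      have h5 : x₀ c + (x i c ⊔ x₀ c - x₀ c) = x i c ⊔ x₀ c := by ring
      rw [h5]

end Pi

section Multi

lemma multilinear_nonneg {n m : ℕ} (T : ContinuousMultilinearMap ℝ (fun _ : Fin m => (Fin n → ℝ)) ℝ)
    (hT : ∀ i : Fin m → Fin n, Function.Injective i → 0 ≤ T (fun j => Pi.single (i j) 1))
    (u : Fin m → Fin n → ℝ) (hu : ∀ j, 0 ≤ u j)
    (hd : ∀ j j' c, j ≠ j' → u j c * u j' c = 0) :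
    0 ≤ T u := by
  have hdecomp : u = fun j => ∑ c : Fin n, u j c • (Pi.single c 1 : Fin n → ℝ) := by
    funext j c'
    simp only [Finset.sum_apply, Pi.smul_apply, Pi.single_apply, smul_eq_mul, mul_ite,
      mul_one, mul_zero]
    simp
  rw [hdecomp, T.map_sum]
  apply Finset.sum_nonneg
  intro r _
  rw [T.map_smul_univ (fun j => u j (r j)) (fun j => (Pi.single (r j) 1 : Fin n → ℝ))]
  by_cases hr : Function.Injective r
  · exact smul_nonneg (Finset.prod_nonneg fun j _ => hu j (r j)) (hT r hr)
  · obtain ⟨j, j', hjj', hne⟩ := Function.not_injective_iff.1 hr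
    have h0 : u j (r j) * u j' (r j') = 0 := by
      rw [hjj']
      exact hd j j' (r j') hne
    have hprod : (∏ j, u j (r j)) = 0 := by
      rcases mul_eq_zero.1 h0 with h | h
      · exact Finset.prod_eq_zero (Finset.mem_univ j) h
      · exact Finset.prod_eq_zero (Finset.mem_univ j') h
    rw [hprod, zero_smul]

end Multi

section Key

variable {n m : ℕ} {f : (Fin n → ℝ) → ℝ} {U : Set (Fin n → ℝ)}

lemma exists_altSum_eq_iteratedFDerivWithin (hU : IsOpen U)
    (hUorth : {x : Fin n → ℝ | 0 ≤ x} ⊆ U) (hf : ContDiffOn ℝ m f U)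
    (x₀ : Fin n → ℝ) (hx₀ : 0 ≤ x₀) (u : Fin m → Fin n → ℝ) (hu : ∀ j, 0 ≤ u j) :
    ∃ ξ, 0 ≤ ξ ∧ ξ ∈ segPts (List.ofFn u) x₀ ∧
      ∑ I : Finset (Fin m), (-1:ℝ)^(m - I.card) * f (x₀ + ∑ i ∈ I, u i)
        = iteratedFDerivWithin ℝ m f U ξ (u ∘ Fin.rev) := by
  have hmem : ∀ v ∈ List.ofFn u, (0 : Fin n → ℝ) ≤ v := by
    intro v hv
    obtain ⟨j, rfl⟩ := List.mem_ofFn.1 hv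
    exact hu j
  have hbox : segPts (List.ofFn u) x₀ ⊆ U := fun z hz =>
    hUorth (segPts_nonneg hmem hx₀ z hz)
  have hflen : ContDiffOn ℝ (List.ofFn u).length f U := by
    rw [List.length_ofFn]; exact hf
  obtain ⟨ξ, hξ, heq⟩ := exists_dList_eq_itD hU (List.ofFn u) f x₀ hflen hbox
  have hξpos : 0 ≤ ξ := segPts_nonneg hmem hx₀ ξ hξ
  have hξU : ξ ∈ U := hbox hξ
  refine ⟨ξ, hξpos, hξ, ?_⟩
  rw [← dList_ofFn_eq_altSum u f x₀, heq]
  exact itD_eq_iteratedFDerivWithin hU m u f hf ξ hξU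

end Key

end SuperAuxiliary

/-- A `C^m` function on (a neighborhood of) the nonnegative orthant is `m`-supermodular
iff all its mixed partial derivatives of order `m` in `m` pairwise distinct coordinate
directions are nonnegative on the orthant. -/
theorem mSupermodular_iff_mixed_partials_nonneg
    (n m : ℕ) (hm : 1 ≤ m) (hmn : m ≤ n)
    (f : (Fin n → ℝ) → ℝ) (U : Set (Fin n → ℝ)) (hU : IsOpen U)
    (hUorth : {x : Fin n → ℝ | 0 ≤ x} ⊆ U)
    (hf : ContDiffOn ℝ m f U) :
    MSupermodular n m f ↔
      ∀ i : Fin m → Fin n, Function.Injective i →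
        ∀ x : Fin n → ℝ, 0 ≤ x →
          0 ≤ iteratedFDeriv ℝ m f x (fun j => Pi.single (i j) (1 : ℝ)) := by
  constructor
  · -- supermodular implies nonneg mixed partials
    intro hsm i hi x hx
    have hxU : x ∈ U := hUorth hx
    set v : Fin m → Fin n → ℝ := fun j => Pi.single (i j) 1 with hv
    have key : ∀ k : ℕ, ∃ ξ : Fin n → ℝ, ξ ∈ U ∧ dist ξ x ≤ (m:ℝ) * (1/((k:ℝ)+1)) ∧
        0 ≤ iteratedFDerivWithin ℝ m f U ξ v := by
      intro k
      set ε : ℝ := 1/((k:ℝ)+1) with hεdef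
      have hεpos : 0 < ε := by positivity
      set i' : Fin m → Fin n := i ∘ Fin.rev with hi'def
      have hi' : Function.Injective i' := hi.comp Fin.rev_injective
      set xs : Fin m → Fin n → ℝ := fun j => Pi.single (i' j) (x (i' j) + ε) with hxsdef
      have hxval : ∀ c, (0:ℝ) ≤ x c := fun c => hx c
      have hxsnn : ∀ j, 0 ≤ xs j := by
        intro j
        rw [Pi.le_def]
        intro c
        simp only [hxsdef, Pi.zero_apply, Pi.single_apply]
        rcases eq_or_ne c (i' j) with rfl | hc
        · rw [if_pos rfl]
          have := hxval (i' j)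
          linarith
        · rw [if_neg hc]
      have hxs_at : ∀ j c, (0:ℝ) ≤ xs j c := by
        intro j c; exact hxsnn j c
      have hdisj : ∀ j j', j ≠ j' → xs j ⊓ xs j' = 0 := by
        intro j j' hne
        have hii : i' j ≠ i' j' := fun h => hne (hi' h)
        funext c
        simp only [hxsdef, Pi.inf_apply, Pi.zero_apply, Pi.single_apply]
        rcases eq_or_ne c (i' j) with rfl | hc
        · rw [if_pos rfl, if_neg hii]
          exact inf_eq_right.2 (by linarith [hxval (i' j)])
        · rw [if_neg hc]
          refine inf_eq_left.2 ?_
          rcases eq_or_ne c (i' j') with rfl | hc'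
          · rw [if_pos rfl]
            have := hxval (i' j')
            linarith
          · rw [if_neg hc']
      set u : Fin m → Fin n → ℝ := fun j => (Pi.single (i' j) ε : Fin n → ℝ) with hudef
      have hueq : ∀ j, x ⊔ xs j - x = u j := by
        intro j
        funext c
        simp only [hudef, hxsdef, Pi.sub_apply, Pi.sup_apply, Pi.single_apply]
        rcases eq_or_ne c (i' j) with rfl | hc
        · rw [if_pos rfl, if_pos rfl,
            sup_eq_right.2 (by linarith [hxval (i' j)] : x (i' j) ≤ x (i' j) + ε)]
          ring
        · rw [if_neg hc, if_neg hc, sup_eq_left.2 (hxval c)]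
          ring
      have hunn : ∀ j, 0 ≤ u j := fun j => (hueq j) ▸ sub_nonneg.2 le_sup_left
      have h0 := hsm x hx xs hxsnn hdisj
      have hsum : ∑ I : Finset (Fin m), (-1:ℝ)^(m - I.card) * f (I.fold (· ⊔ ·) x xs)
          = ∑ I : Finset (Fin m), (-1:ℝ)^(m - I.card) * f (x + ∑ j ∈ I, u j) := by
        refine Finset.sum_congr rfl fun I _ => ?_
        rw [fold_sup_eq x hx xs hxsnn hdisj I,
          Finset.sum_congr rfl fun j _ => hueq j]
      rw [hsum] at h0
      obtain ⟨ξ, hξ0, hξmem, hξeq⟩ :=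
        exists_altSum_eq_iteratedFDerivWithin hU hUorth hf x hx u hunn
      rw [hξeq] at h0
      -- rewrite the tuple
      have htuple : (u ∘ Fin.rev) = fun j => ε • v j := by
        funext j c
        simp only [Function.comp_apply, hudef, hi'def, hv, Fin.rev_rev, Pi.smul_apply,
          smul_eq_mul, Pi.single_apply]
        rcases eq_or_ne c (i j) with rfl | hc
        · rw [if_pos rfl, if_pos rfl]; ring
        · rw [if_neg hc, if_neg hc]; ring
      rw [htuple, (iteratedFDerivWithin ℝ m f U ξ).map_smul_univ (fun _ => ε) v] at h0
      have hpow : (∏ _j : Fin m, ε) = ε ^ m := by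
        rw [Finset.prod_const, Finset.card_univ, Fintype.card_fin]
      rw [hpow, smul_eq_mul] at h0
      have hD : 0 ≤ iteratedFDerivWithin ℝ m f U ξ v :=
        nonneg_of_mul_nonneg_right h0 (pow_pos hεpos m)
      refine ⟨ξ, hUorth hξ0, ?_, hD⟩
      -- distance bound
      rw [dist_eq_norm]
      have hb := norm_sub_le_of_mem_segPts hξmem
      have hlistbound : ((List.ofFn u).map norm).sum ≤ (m:ℝ) * ε := by
        have hone : ∀ r ∈ (List.ofFn u).map norm, r ≤ ε := by
          intro r hr
          obtain ⟨w, hw, rfl⟩ := List.mem_map.1 hr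
          obtain ⟨j, rfl⟩ := List.mem_ofFn.1 hw
          refine pi_norm_le_iff_of_nonneg hεpos.le |>.2 fun c => ?_
          simp only [hudef, Real.norm_eq_abs, Pi.single_apply]
          rcases eq_or_ne c (i' j) with rfl | hc
          · rw [if_pos rfl, abs_of_pos hεpos]
          · rw [if_neg hc, abs_zero]; exact hεpos.le
        have := List.sum_le_card_nsmul ((List.ofFn u).map norm) ε hone
        rwa [List.length_map, List.length_ofFn, nsmul_eq_mul] at this
      exact le_trans hb hlistbound
    choose ξ hξU hξdist hξD using key
    have hlim : Filter.Tendsto ξ Filter.atTop (nhds x) := by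
      rw [tendsto_iff_dist_tendsto_zero]
      apply squeeze_zero (fun k => dist_nonneg) hξdist
      have h1 : Filter.Tendsto (fun k : ℕ => 1/((k:ℝ)+1)) Filter.atTop (nhds 0) :=
        tendsto_one_div_add_atTop_nhds_zero_nat
      have := h1.const_mul (m:ℝ)
      simpa using this
    have hlimU : Filter.Tendsto ξ Filter.atTop (nhdsWithin x U) := by
      rw [tendsto_nhdsWithin_iff]
      exact ⟨hlim, Filter.Eventually.of_forall hξU⟩
    have hcont : ContinuousOn (iteratedFDerivWithin ℝ m f U) U :=
      hf.continuousOn_iteratedFDerivWithin le_rfl hU.uniqueDiffOn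
    have hDcont := (hcont x hxU).tendsto.comp hlimU
    have heval : Filter.Tendsto (fun k => iteratedFDerivWithin ℝ m f U (ξ k) v)
        Filter.atTop (nhds (iteratedFDerivWithin ℝ m f U x v)) :=
      ((continuous_eval_const v).tendsto _).comp hDcont
    have hfinal : 0 ≤ iteratedFDerivWithin ℝ m f U x v := ge_of_tendsto' heval hξD
    rwa [iteratedFDerivWithin_of_isOpen m hU hxU] at hfinal
  · -- nonneg mixed partials implies supermodular
    intro hpart x₀ hx₀ xs hxs hdisj
    set u : Fin m → Fin n → ℝ := fun j => x₀ ⊔ xs j - x₀ with hudef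
    have hunn : ∀ j, 0 ≤ u j := fun j => sub_nonneg.2 le_sup_left
    have hsum : ∑ I : Finset (Fin m), (-1:ℝ)^(m - I.card) * f (I.fold (· ⊔ ·) x₀ xs)
        = ∑ I : Finset (Fin m), (-1:ℝ)^(m - I.card) * f (x₀ + ∑ j ∈ I, u j) := by
      refine Finset.sum_congr rfl fun I _ => ?_
      rw [fold_sup_eq x₀ hx₀ xs hxs hdisj I]
    rw [hsum]
    obtain ⟨ξ, hξ0, hξmem, hξeq⟩ :=
      exists_altSum_eq_iteratedFDerivWithin hU hUorth hf x₀ hx₀ u hunn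
    rw [hξeq]
    have hξU : ξ ∈ U := hUorth hξ0
    -- mixed u-disjointness
    have hud : ∀ j j' c, j ≠ j' → u j c * u j' c = 0 := by
      intro j j' c hne
      have hmin : min (xs j c) (xs j' c) = 0 := by
        have := congrFun (hdisj j j' hne) c
        simpa [Pi.inf_apply] using this
      have hz : ∀ jj, xs jj c = 0 → u jj c = 0 := by
        intro jj h
        simp only [hudef, Pi.sub_apply, Pi.sup_apply, h]
        have hc0 : (0:ℝ) ≤ x₀ c := hx₀ c
        rw [sup_eq_left.2 hc0]
        ring
      rcases le_total (xs j c) (xs j' c) with h | h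
      · rw [hz j (by rwa [min_eq_left h] at hmin), zero_mul]
      · rw [hz j' (by rwa [min_eq_right h] at hmin), mul_zero]
    apply multilinear_nonneg (iteratedFDerivWithin ℝ m f U ξ)
    · intro i hi
      have := hpart i hi ξ hξ0
      rwa [← iteratedFDerivWithin_of_isOpen m hU hξU] at this
    · intro j
      exact hunn (Fin.rev j)
    · intro j j' c hne
      exact hud (Fin.rev j) (Fin.rev j') c (fun h => hne (Fin.rev_injective h))
end

section
/- Let A, B, C be nonempty compact subsets of ℝ^n with 0 ∈ B and 0 ∈ C. Define Δ_B(A) = (A + B) \ A and Δ_C(Δ_B(A)) = ((Δ_B(A)) + C) \ (Δ_B(A)). Then |Δ_C(Δ_B(A))| ≥ |A + B + C| − |A + C| − |A + B| + |A|. -/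
open scoped Pointwise
open MeasureTheory

/-- For compact `A, B, C ⊂ ℝ^n` with `0 ∈ B` and `0 ∈ C`, the double set increment
`Δ_C Δ_B (A)` satisfies `|Δ_C Δ_B (A)| ≥ |A+B+C| - |A+C| - |A+B| + |A|`. -/
theorem volume_double_increment_ge
    (n : ℕ) (A B C : Set (EuclideanSpace ℝ (Fin n)))
    (hAne : A.Nonempty) (hAcp : IsCompact A)
    (hBne : B.Nonempty) (hBcp : IsCompact B)
    (hCne : C.Nonempty) (hCcp : IsCompact C)
    (hB0 : (0 : EuclideanSpace ℝ (Fin n)) ∈ B)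
    (hC0 : (0 : EuclideanSpace ℝ (Fin n)) ∈ C) :
    (volume (((A + B) \ A + C) \ ((A + B) \ A))).toReal ≥
      (volume (A + B + C)).toReal - (volume (A + C)).toReal
        - (volume (A + B)).toReal + (volume A).toReal := by
  set D := (A + B) \ A with hDdef
  have hABcp : IsCompact (A + B) := hAcp.add hBcp
  have hABCcp : IsCompact (A + B + C) := hABcp.add hCcp
  have hACcp : IsCompact (A + C) := hAcp.add hCcp
  have hDsub : D ⊆ A + B := Set.diff_subset
  have hDCsub : D + C ⊆ A + B + C := Set.add_subset_add_right hDsub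
  have hABCfin : volume (A + B + C) ≠ ⊤ := hABCcp.measure_lt_top.ne
  have hABfin : volume (A + B) ≠ ⊤ := hABcp.measure_lt_top.ne
  have hACfin : volume (A + C) ≠ ⊤ := hACcp.measure_lt_top.ne
  have hAfin : volume A ≠ ⊤ := hAcp.measure_lt_top.ne
  have hDfin : volume D ≠ ⊤ := ((measure_mono hDsub).trans_lt hABcp.measure_lt_top).ne
  have hDCfin : volume (D + C) ≠ ⊤ :=
    ((measure_mono hDCsub).trans_lt hABCcp.measure_lt_top).ne
  have hAsub : A ⊆ A + B := by
    intro x hx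
    simpa using Set.add_mem_add hx hB0
  have hDmeas : MeasurableSet D :=
    hABcp.isClosed.measurableSet.diff hAcp.isClosed.measurableSet
  have hDDC : D ⊆ D + C := by
    intro x hx
    simpa using Set.add_mem_add hx hC0
  have h1 : volume D = volume (A + B) - volume A :=
    measure_diff hAsub hAcp.isClosed.measurableSet.nullMeasurableSet hAfin
  have h2 : volume ((D + C) \ D) = volume (D + C) - volume D :=
    measure_diff hDDC hDmeas.nullMeasurableSet hDfin
  have hcover : A + B + C ⊆ (D + C) ∪ (A + C) := by
    rintro x hx
    obtain ⟨y, hy, c, hc, rfl⟩ := hx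
    by_cases hyA : y ∈ A
    · exact Or.inr (Set.add_mem_add hyA hc)
    · exact Or.inl (Set.add_mem_add ⟨hy, hyA⟩ hc)
  have h3 : volume (A + B + C) ≤ volume (D + C) + volume (A + C) :=
    (measure_mono hcover).trans (measure_union_le _ _)
  have h1' : (volume D).toReal = (volume (A + B)).toReal - (volume A).toReal := by
    rw [h1, ENNReal.toReal_sub_of_le (measure_mono hAsub) hABfin]
  have h2' : (volume ((D + C) \ D)).toReal
      = (volume (D + C)).toReal - (volume D).toReal := by
    rw [h2, ENNReal.toReal_sub_of_le (measure_mono hDDC) hDCfin]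
  have h3' : (volume (A + B + C)).toReal
      ≤ (volume (D + C)).toReal + (volume (A + C)).toReal := by
    have := ENNReal.toReal_mono (by simp [hDCfin, hACfin]) h3
    rwa [ENNReal.toReal_add hDCfin hACfin] at this
  rw [ge_iff_le]
  linarith
end

section
/- Let A be a nonempty compact convex subset of ℝ^n, let C be a nonempty compact subset of ℝ^n, and let u ∈ ℝ^n. Then |A + C + [0, u]| − |A + [0, u]| ≥ |A + C| − |A|, where [0, u] denotes the closed segment from the origin to u. -/
open scoped Pointwise
open MeasureTheory Set


lemma oneD_lower {F : Set ℝ} (hF : IsCompact F) (hne : F.Nonempty) {L : ℝ} (hL : 0 ≤ L) :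
    volume F + ENNReal.ofReal L ≤ volume (F + Icc 0 L) := by
  have hmem : sSup F ∈ F := hF.sSup_mem hne
  have hsub : F ∪ Ioc (sSup F) (sSup F + L) ⊆ F + Icc 0 L := by
    rintro x (hx | hx)
    · exact ⟨x, hx, 0, ⟨le_refl 0, hL⟩, add_zero x⟩
    · exact ⟨sSup F, hmem, x - sSup F, ⟨by linarith [hx.1], by linarith [hx.2]⟩, by ring⟩
  have hdisj : Disjoint F (Ioc (sSup F) (sSup F + L)) := by
    rw [Set.disjoint_left]
    intro x hx hx2
    exact absurd (le_csSup hF.bddAbove hx) (not_le.2 hx2.1)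
  calc volume F + ENNReal.ofReal L
      = volume (F ∪ Ioc (sSup F) (sSup F + L)) := by
        rw [measure_union hdisj measurableSet_Ioc, Real.volume_Ioc, add_sub_cancel_left]
    _ ≤ volume (F + Icc 0 L) := measure_mono hsub

lemma oneD_upper {F : Set ℝ} (hF : IsCompact F) (hcv : Convex ℝ F) {L : ℝ} (hL : 0 ≤ L) :
    volume (F + Icc 0 L) ≤ volume F + ENNReal.ofReal L := by
  rcases F.eq_empty_or_nonempty with rfl | hne
  · simp
  have hI : F = Icc (sInf F) (sSup F) :=
    eq_Icc_of_connected_compact ⟨hne, hcv.isPreconnected⟩ hF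
  have hle : sInf F ≤ sSup F := csInf_le_csSup hne hF.bddBelow hF.bddAbove
  rw [hI, Set.Icc_add_Icc hle hL, Real.volume_Icc, Real.volume_Icc,
    ← ENNReal.ofReal_add (by linarith) hL]
  exact ENNReal.ofReal_le_ofReal (by linarith)

lemma slice_compact {V : Type*} [TopologicalSpace V] {X : Set (ℝ × V)} (hX : IsCompact X)
    (hVc : ∀ y : V, IsClosed ({y} : Set V)) (y : V) : IsCompact {t : ℝ | (t, y) ∈ X} := by
  have h : {t : ℝ | (t, y) ∈ X} = Prod.fst '' (X ∩ (univ ×ˢ {y})) := by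
    ext t
    constructor
    · intro ht; exact ⟨(t, y), ⟨ht, ⟨trivial, rfl⟩⟩, rfl⟩
    · rintro ⟨⟨s, w⟩, ⟨hmem, ⟨-, hw⟩⟩, rfl⟩
      simp only [mem_singleton_iff] at hw
      subst hw; exact hmem
  rw [h]
  exact (hX.inter_right (isClosed_univ.prod (hVc y))).image continuous_fst

lemma slice_add_seg {V : Type*} [AddCommGroup V] (X : Set (ℝ × V)) (L : ℝ) (y : V) :
    {t : ℝ | (t, y) ∈ X + (Icc 0 L ×ˢ ({0} : Set V))} = {t : ℝ | (t, y) ∈ X} + Icc 0 L := by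
  ext t
  constructor
  · rintro ⟨⟨s, v⟩, hsv, ⟨r, w⟩, ⟨hr, hw⟩, h⟩
    simp only [mem_singleton_iff] at hw
    simp only [Prod.mk_add_mk, Prod.mk.injEq] at h
    subst hw
    refine ⟨s, ?_, r, hr, h.1⟩
    simpa [← h.2] using hsv
  · rintro ⟨s, hs, r, hr, rfl⟩
    exact ⟨(s, y), hs, (r, 0), ⟨hr, rfl⟩, by simp⟩

lemma slice_convex {V : Type*} [AddCommGroup V] [Module ℝ V] {X : Set (ℝ × V)}
    (h : Convex ℝ X) (y : V) : Convex ℝ {t : ℝ | (t, y) ∈ X} := by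
  intro t1 h1 t2 h2 a b ha hb hab
  have hy : a • y + b • y = y := by rw [← add_smul, hab, one_smul]
  have hmem := h h1 h2 ha hb hab
  simpa [Prod.smul_mk, Prod.mk_add_mk, hy] using hmem

lemma core {m : ℕ} (A C : Set (ℝ × (Fin m → ℝ)))
    (hAcp : IsCompact A) (hAcv : Convex ℝ A)
    (hCcp : IsCompact C) (hCne : C.Nonempty) {L : ℝ} (hL : 0 ≤ L) :
    volume (A + C) + volume (A + Icc 0 L ×ˢ ({0} : Set (Fin m → ℝ))) ≤
      volume (A + C + Icc 0 L ×ˢ ({0} : Set (Fin m → ℝ))) + volume A := by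
  set Seg : Set (ℝ × (Fin m → ℝ)) := Icc 0 L ×ˢ ({0} : Set (Fin m → ℝ)) with hSeg
  have hSegcp : IsCompact Seg := isCompact_Icc.prod isCompact_singleton
  have hACcp : IsCompact (A + C) := hAcp.add hCcp
  have hACScp : IsCompact (A + C + Seg) := hACcp.add hSegcp
  have hAScp : IsCompact (A + Seg) := hAcp.add hSegcp
  have hACm := hACcp.measurableSet
  have hACSm := hACScp.measurableSet
  have hASm := hAScp.measurableSet
  have hAm := hAcp.measurableSet
  have hprAC : MeasurableSet (Prod.snd '' (A + C)) := (hACcp.image continuous_snd).measurableSet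
  have hprA : MeasurableSet (Prod.snd '' A) := (hAcp.image continuous_snd).measurableSet
  have hfibrw : ∀ (X : Set (ℝ × (Fin m → ℝ))), MeasurableSet X →
      volume X = ∫⁻ y, volume {t : ℝ | (t, y) ∈ X} ∂(volume : Measure (Fin m → ℝ)) := by
    intro X hX
    rw [Measure.volume_eq_prod, Measure.prod_apply_symm hX]
    rfl
  have hfmeasAC : Measurable fun y : Fin m → ℝ => volume {t : ℝ | (t, y) ∈ A + C} :=
    measurable_measure_prodMk_right hACm
  have hfmeasA : Measurable fun y : Fin m → ℝ => volume {t : ℝ | (t, y) ∈ A} :=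
    measurable_measure_prodMk_right hAm
  -- Step A
  have stepA : volume (A + C) + ENNReal.ofReal L * volume (Prod.snd '' (A + C))
      ≤ volume (A + C + Seg) := by
    have hpt : ∀ y : Fin m → ℝ, volume {t : ℝ | (t, y) ∈ A + C}
        + (Prod.snd '' (A + C)).indicator (fun _ => ENNReal.ofReal L) y
        ≤ volume {t : ℝ | (t, y) ∈ A + C + Seg} := by
      intro y
      rw [hSeg, slice_add_seg]
      by_cases hy : y ∈ Prod.snd '' (A + C)
      · rw [indicator_of_mem hy]
        obtain ⟨p, hp, hpy⟩ := hy
        have hne : {t : ℝ | (t, y) ∈ A + C}.Nonempty :=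
          ⟨p.1, by rw [← hpy]; simpa using hp⟩
        exact oneD_lower (slice_compact hACcp (fun _ => isClosed_singleton) y) hne hL
      · rw [indicator_of_notMem hy, add_zero]
        exact measure_mono (fun x hx => ⟨x, hx, 0, ⟨le_refl 0, hL⟩, add_zero x⟩)
    calc volume (A + C) + ENNReal.ofReal L * volume (Prod.snd '' (A + C))
        = (∫⁻ y, volume {t : ℝ | (t, y) ∈ A + C} ∂(volume : Measure (Fin m → ℝ)))
          + ∫⁻ y, (Prod.snd '' (A + C)).indicator (fun _ => ENNReal.ofReal L) y
              ∂(volume : Measure (Fin m → ℝ)) := by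
          rw [lintegral_indicator hprAC _, setLIntegral_const, ← hfibrw _ hACm]
      _ = ∫⁻ y, (volume {t : ℝ | (t, y) ∈ A + C}
            + (Prod.snd '' (A + C)).indicator (fun _ => ENNReal.ofReal L) y)
            ∂(volume : Measure (Fin m → ℝ)) := (lintegral_add_left hfmeasAC _).symm
      _ ≤ ∫⁻ y, volume {t : ℝ | (t, y) ∈ A + C + Seg} ∂(volume : Measure (Fin m → ℝ)) :=
          lintegral_mono hpt
      _ = volume (A + C + Seg) := (hfibrw _ hACSm).symm
  -- Step B
  have stepB : volume (A + Seg) ≤ volume A + ENNReal.ofReal L * volume (Prod.snd '' A) := by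
    have hpt : ∀ y : Fin m → ℝ, volume {t : ℝ | (t, y) ∈ A + Seg}
        ≤ volume {t : ℝ | (t, y) ∈ A}
          + (Prod.snd '' A).indicator (fun _ => ENNReal.ofReal L) y := by
      intro y
      rw [hSeg, slice_add_seg]
      by_cases hy : y ∈ Prod.snd '' A
      · rw [indicator_of_mem hy]
        exact oneD_upper (slice_compact hAcp (fun _ => isClosed_singleton) y)
          (slice_convex hAcv y) hL
      · have hempty : {t : ℝ | (t, y) ∈ A} = ∅ := by
          ext t
          simp only [mem_empty_iff_false, iff_false, mem_setOf_eq]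
          exact fun ht => hy ⟨(t, y), ht, rfl⟩
        rw [hempty, Set.empty_add]
        simp
    calc volume (A + Seg)
        = ∫⁻ y, volume {t : ℝ | (t, y) ∈ A + Seg} ∂(volume : Measure (Fin m → ℝ)) := hfibrw _ hASm
      _ ≤ ∫⁻ y, (volume {t : ℝ | (t, y) ∈ A}
            + (Prod.snd '' A).indicator (fun _ => ENNReal.ofReal L) y)
            ∂(volume : Measure (Fin m → ℝ)) := lintegral_mono hpt
      _ = volume A + ENNReal.ofReal L * volume (Prod.snd '' A) := by
          rw [lintegral_add_left hfmeasA, lintegral_indicator hprA _, setLIntegral_const,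
            ← hfibrw _ hAm]
  -- Step C
  obtain ⟨c₀, hc₀⟩ := hCne
  have stepC : volume (Prod.snd '' A) ≤ volume (Prod.snd '' (A + C)) := by
    have hsub : (fun v : Fin m → ℝ => v + c₀.2) '' (Prod.snd '' A) ⊆ Prod.snd '' (A + C) := by
      rintro _ ⟨_, ⟨a, ha, rfl⟩, rfl⟩
      exact ⟨a + c₀, add_mem_add ha hc₀, rfl⟩
    have htrans : volume ((fun v : Fin m → ℝ => v + c₀.2) '' (Prod.snd '' A))
        = volume (Prod.snd '' A) := by
      rw [Set.image_add_right, measure_preimage_add_right]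
    rw [← htrans]
    exact measure_mono hsub
  calc volume (A + C) + volume (A + Seg)
      ≤ volume (A + C) + (volume A + ENNReal.ofReal L * volume (Prod.snd '' A)) := by
        gcongr
    _ ≤ volume (A + C) + (volume A + ENNReal.ofReal L * volume (Prod.snd '' (A + C))) := by
        gcongr
    _ = (volume (A + C) + ENNReal.ofReal L * volume (Prod.snd '' (A + C))) + volume A := by
        ring
    _ ≤ volume (A + C + Seg) + volume A := by gcongr

/-- For a nonempty compact convex `A ⊂ ℝ^n`, a nonempty compact `C ⊂ ℝ^n` and a vector `u`,
adding the segment `[0, u]` increases volume by more after adding `C`: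
`|A + C + [0,u]| - |A + [0,u]| ≥ |A + C| - |A|`. -/
theorem volume_add_segment_increment
    (n : ℕ) (A C : Set (EuclideanSpace ℝ (Fin n))) (u : EuclideanSpace ℝ (Fin n))
    (hAne : A.Nonempty) (hAcp : IsCompact A) (hAcv : Convex ℝ A)
    (hCne : C.Nonempty) (hCcp : IsCompact C) :
    (volume (A + C + segment ℝ 0 u)).toReal - (volume (A + segment ℝ 0 u)).toReal ≥
      (volume (A + C)).toReal - (volume A).toReal := by
  rcases eq_or_ne u 0 with rfl | hu
  · have hseg : segment ℝ (0 : EuclideanSpace ℝ (Fin n)) 0 = {0} := segment_same ℝ 0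
    have hid : ∀ X : Set (EuclideanSpace ℝ (Fin n)), X + ({0} : Set _) = X := by
      intro X; simp [Set.add_singleton]
    rw [hseg, hid, hid]
  · cases n with
    | zero =>
        refine absurd ?_ hu
        have : Subsingleton (EuclideanSpace ℝ (Fin 0)) := by
          constructor; intro a b; ext i; exact i.elim0
        exact Subsingleton.elim u 0
    | succ m =>
      have hnorm : ‖u‖ ≠ 0 := norm_ne_zero_iff.2 hu
      have hnormpos : 0 < ‖u‖ := norm_pos_iff.2 hu
      -- orthonormal basis with b 0 = ‖u‖⁻¹ • u
      have hv : Orthonormal ℝ (({0} : Set (Fin (m+1))).restrict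
          (fun _ => ‖u‖⁻¹ • u : Fin (m+1) → EuclideanSpace ℝ (Fin (m+1)))) := by
        constructor
        · intro i
          show ‖‖u‖⁻¹ • u‖ = 1
          rw [norm_smul, norm_inv, norm_norm, inv_mul_cancel₀ hnorm]
        · intro i j hij
          exact absurd (Subsingleton.elim i j) hij
      obtain ⟨b, hb⟩ := hv.exists_orthonormalBasis_extension_of_card_eq
        (by simp [finrank_euclideanSpace])
      have hb0 : b 0 = ‖u‖⁻¹ • u := hb 0 rfl
      -- the measurable equivalence
      set Ψ : EuclideanSpace ℝ (Fin (m+1)) ≃ᵐ (ℝ × (Fin m → ℝ)) :=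
        (b.measurableEquiv.trans ((MeasurableEquiv.toLp 2 (Fin (m+1) → ℝ)).symm.trans
          (MeasurableEquiv.piFinSuccAbove (fun _ => ℝ) 0))) with hΨdef
      have hΨfun : ∀ x, Ψ x = (b.repr x 0, fun j => b.repr x j.succ) := fun _ => rfl
      have hΨmp : MeasurePreserving Ψ volume volume := by
        exact ((volume_preserving_piFinSuccAbove (fun _ : Fin (m+1) => ℝ) 0).comp
          ((EuclideanSpace.volume_preserving_symm_measurableEquiv_toLp (Fin (m+1))).comp
            b.measurePreserving_measurableEquiv))
      have hΨadd : ∀ x y, Ψ (x + y) = Ψ x + Ψ y := by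
        intro x y; simp only [hΨfun, map_add]; rfl
      have hΨsmul : ∀ (c : ℝ) (x), Ψ (c • x) = c • Ψ x := by
        intro c x; simp only [hΨfun, _root_.map_smul]; rfl
      have hΨlin : IsLinearMap ℝ Ψ := ⟨hΨadd, hΨsmul⟩
      have hΨim : ∀ X : Set (EuclideanSpace ℝ (Fin (m+1))), MeasurableSet X →
          volume (Ψ '' X) = volume X := by
        intro X hX
        rw [MeasurableEquiv.image_eq_preimage_symm]
        exact (hΨmp.symm Ψ).measure_preimage hX.nullMeasurableSet
      have hΨimadd : ∀ X Y : Set (EuclideanSpace ℝ (Fin (m+1))),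
          Ψ '' (X + Y) = Ψ '' X + Ψ '' Y := by
        intro X Y
        exact Set.image_add (AddMonoidHom.mk' Ψ hΨadd)
      -- segment facts
      have hsegrep : segment ℝ (0 : EuclideanSpace ℝ (Fin (m+1))) u
          = (fun θ : ℝ => θ • u) '' Icc 0 1 := by
        rw [segment_eq_image]; simp
      have hsegcp : IsCompact (segment ℝ (0 : EuclideanSpace ℝ (Fin (m+1))) u) := by
        rw [hsegrep]
        exact isCompact_Icc.image (continuous_id.smul continuous_const)
      have hΨu : Ψ u = (‖u‖, (0 : Fin m → ℝ)) := by
        have hurep : b.repr u = ‖u‖ • EuclideanSpace.single 0 1 := by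
          have h : u = ‖u‖ • b 0 := by rw [hb0, smul_inv_smul₀ hnorm]
          conv_lhs => rw [h]
          rw [_root_.map_smul, OrthonormalBasis.repr_self]
        rw [hΨfun, hurep, Prod.mk.injEq]
        constructor
        · simp [EuclideanSpace.single_apply]
        · funext j
          simp [EuclideanSpace.single_apply, Fin.succ_ne_zero]
      have hsegim : Ψ '' segment ℝ 0 u = Icc 0 ‖u‖ ×ˢ ({0} : Set (Fin m → ℝ)) := by
        rw [hsegrep, ← Set.image_comp]
        have hcomp : (Ψ ∘ fun θ : ℝ => θ • u)
            = fun θ : ℝ => θ • (‖u‖, (0 : Fin m → ℝ)) := by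
          funext θ; rw [Function.comp_apply, hΨsmul, hΨu]
        rw [hcomp]
        ext ⟨s, w⟩
        simp only [Set.mem_image, Set.mem_Icc, Set.mem_prod, Set.mem_singleton_iff,
          Prod.smul_mk, smul_eq_mul, smul_zero, Prod.mk.injEq]
        constructor
        · rintro ⟨θ, ⟨h0, h1⟩, hs, hw⟩
          refine ⟨⟨?_, ?_⟩, hw.symm⟩
          · rw [← hs]; exact mul_nonneg h0 (norm_nonneg u)
          · rw [← hs]; nlinarith [norm_nonneg u]
        · rintro ⟨⟨h0, h1⟩, hw⟩
          exact ⟨s / ‖u‖, ⟨div_nonneg h0 (norm_nonneg u), (div_le_one hnormpos).2 h1⟩,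
            div_mul_cancel₀ s hnorm, hw.symm⟩
      have hΨcont : Continuous Ψ := by
        have : ⇑Ψ = fun x => ((b.repr x : EuclideanSpace ℝ (Fin (m+1))) 0,
            fun j : Fin m => (b.repr x : EuclideanSpace ℝ (Fin (m+1))) j.succ) :=
          funext hΨfun
        rw [this]
        exact ((continuous_apply (0 : Fin (m+1))).comp ((PiLp.continuous_ofLp 2 _).comp b.repr.continuous)).prodMk
          (continuous_pi fun j =>
            (continuous_apply (Fin.succ j)).comp ((PiLp.continuous_ofLp 2 _).comp b.repr.continuous))
      -- apply core
      have key := core (Ψ '' A) (Ψ '' C) (hAcp.image hΨcont)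
        (hAcv.is_linear_image hΨlin) (hCcp.image hΨcont) (hCne.image Ψ)
        (norm_nonneg u)
      have e1 : volume (Ψ '' A + Ψ '' C) = volume (A + C) := by
        rw [← hΨimadd]; exact hΨim _ (hAcp.add hCcp).measurableSet
      have e2 : volume (Ψ '' A + Icc 0 ‖u‖ ×ˢ ({0} : Set (Fin m → ℝ)))
          = volume (A + segment ℝ 0 u) := by
        rw [← hsegim, ← hΨimadd]; exact hΨim _ (hAcp.add hsegcp).measurableSet
      have e3 : volume (Ψ '' A + Ψ '' C + Icc 0 ‖u‖ ×ˢ ({0} : Set (Fin m → ℝ)))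
          = volume (A + C + segment ℝ 0 u) := by
        rw [← hsegim, ← hΨimadd, ← hΨimadd]
        exact hΨim _ ((hAcp.add hCcp).add hsegcp).measurableSet
      have e4 : volume (Ψ '' A) = volume A := hΨim _ hAcp.measurableSet
      rw [e1, e2, e3, e4] at key
      have f1 : volume (A + C + segment ℝ 0 u) ≠ ⊤ :=
        (((hAcp.add hCcp).add hsegcp).measure_lt_top).ne
      have f2 : volume (A + segment ℝ 0 u) ≠ ⊤ := ((hAcp.add hsegcp).measure_lt_top).ne
      have f3 : volume (A + C) ≠ ⊤ := ((hAcp.add hCcp).measure_lt_top).ne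
      have f4 : volume A ≠ ⊤ := hAcp.measure_lt_top.ne
      have h := ENNReal.toReal_mono (ENNReal.add_ne_top.2 ⟨f1, f4⟩) key
      rw [ENNReal.toReal_add f3 f2, ENNReal.toReal_add f1 f4] at h
      linarith
end

section
/- Let A be a nonempty compact convex subset of ℝ^n, let B = [0, u_1] + ⋯ + [0, u_N] be a zonotope (a finite Minkowski sum of closed segments [0, u_i] with u_i ∈ ℝ^n), and let C be a nonempty compact subset of ℝ^n. Then |A + B + C| + |A| ≥ |A + B| + |A + C|. -/
open scoped Pointwise
open MeasureTheory Set
open scoped ENNReal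

namespace ZonotopeSupermod

/-! ### Generic algebra lemmas about images under additive maps -/

lemma image_add_of_addhom {α β : Type*} [Add α] [Add β] (f : α → β)
    (hf : ∀ a b, f (a + b) = f a + f b) (X Y : Set α) :
    f '' (X + Y) = f '' X + f '' Y := by
  ext z
  constructor
  · rintro ⟨w, ⟨x, hx, y, hy, rfl⟩, rfl⟩
    exact ⟨f x, ⟨x, hx, rfl⟩, f y, ⟨y, hy, rfl⟩, (hf x y).symm⟩
  · rintro ⟨_, ⟨x, hx, rfl⟩, _, ⟨y, hy, rfl⟩, rfl⟩
    exact ⟨x + y, ⟨x, hx, y, hy, rfl⟩, hf x y⟩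

lemma convex_image_of_linearish {α β : Type*} [AddCommMonoid α] [Module ℝ α]
    [AddCommMonoid β] [Module ℝ β] (f : α → β)
    (hadd : ∀ a b, f (a + b) = f a + f b) (hsmul : ∀ (r : ℝ) a, f (r • a) = r • f a)
    {A : Set α} (hA : Convex ℝ A) : Convex ℝ (f '' A) := by
  rintro _ ⟨x, hx, rfl⟩ _ ⟨y, hy, rfl⟩ a b ha hb hab
  rw [← hsmul, ← hsmul, ← hadd]
  exact Set.mem_image_of_mem f (hA hx hy ha hb hab)

lemma image_segment_of_linearish {α β : Type*} [AddCommGroup α] [Module ℝ α]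
    [AddCommGroup β] [Module ℝ β] (f : α → β)
    (hadd : ∀ a b, f (a + b) = f a + f b) (hsmul : ∀ (r : ℝ) a, f (r • a) = r • f a)
    (u : α) : f '' segment ℝ 0 u = segment ℝ 0 (f u) := by
  have hf0 : f 0 = 0 := by
    have := hsmul 0 u; simpa using this
  rw [segment_eq_image ℝ (0 : α) u, segment_eq_image ℝ (0 : β) (f u), Set.image_image]
  apply Set.image_congr
  intro θ _
  rw [smul_zero, smul_zero, zero_add, zero_add, hsmul]

/-! ### One-dimensional lemmas -/

lemma Icc_add_Icc_real {a b c : ℝ} (hab : a ≤ b) (hc : 0 ≤ c) :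
    Icc a b + Icc 0 c = Icc a (b + c) := by
  ext x
  constructor
  · rintro ⟨y, hy, z, hz, rfl⟩
    exact ⟨show a ≤ y + z by linarith [hy.1, hz.1],
      show y + z ≤ b + c by linarith [hy.2, hz.2]⟩
  · rintro ⟨h1, h2⟩
    rcases le_total x b with h | h
    · exact ⟨x, ⟨h1, h⟩, 0, ⟨le_refl 0, hc⟩, add_zero x⟩
    · exact ⟨b, ⟨hab, le_refl b⟩, x - b, ⟨by linarith, by linarith⟩, by ring⟩

lemma oneD_ge {X : Set ℝ} (hX : IsCompact X) (hne : X.Nonempty) {c : ℝ} (hc : 0 ≤ c) :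
    volume X + ENNReal.ofReal c ≤ volume (X + Icc 0 c) := by
  set M := sSup X with hM
  have hMX : M ∈ X := hX.sSup_mem hne
  have hsub : (X ∩ Iio M) ∪ Icc M (M + c) ⊆ X + Icc 0 c := by
    rintro x (⟨hx, -⟩ | hx)
    · exact ⟨x, hx, 0, ⟨le_refl 0, hc⟩, add_zero x⟩
    · exact ⟨M, hMX, x - M, ⟨by linarith [hx.1], by linarith [hx.2]⟩, by ring⟩
  have hdisj : Disjoint (X ∩ Iio M) (Icc M (M + c)) := by
    rw [Set.disjoint_left]
    rintro x ⟨-, hx2⟩ ⟨hx3, -⟩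
    exact absurd hx3 (not_le.2 hx2)
  have hvolX : volume X = volume (X ∩ Iio M) := by
    apply le_antisymm
    · have hsub2 : X ⊆ (X ∩ Iio M) ∪ {M} := by
        intro x hx
        rcases lt_or_eq_of_le (le_csSup hX.bddAbove hx) with h | h
        · exact Or.inl ⟨hx, h⟩
        · exact Or.inr h
      calc volume X ≤ volume ((X ∩ Iio M) ∪ {M}) := measure_mono hsub2
        _ ≤ volume (X ∩ Iio M) + volume {M} := measure_union_le _ _
        _ = volume (X ∩ Iio M) := by simp
    · exact measure_mono Set.inter_subset_left
  calc volume X + ENNReal.ofReal c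
      = volume (X ∩ Iio M) + volume (Icc M (M + c)) := by
        rw [hvolX, Real.volume_Icc]; congr 1; congr 1; ring
    _ = volume ((X ∩ Iio M) ∪ Icc M (M + c)) :=
        (measure_union hdisj measurableSet_Icc).symm
    _ ≤ volume (X + Icc 0 c) := measure_mono hsub

lemma oneD_le {X : Set ℝ} (hX : IsCompact X) (hXc : Convex ℝ X) (hne : X.Nonempty)
    {c : ℝ} (hc : 0 ≤ c) :
    volume (X + Icc 0 c) ≤ volume X + ENNReal.ofReal c := by
  have hXeq : X = Icc (sInf X) (sSup X) :=
    eq_Icc_of_connected_compact ⟨hne, hXc.isPreconnected⟩ hX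
  have hle : sInf X ≤ sSup X := csInf_le_csSup hne hX.bddBelow hX.bddAbove
  rw [hXeq, Icc_add_Icc_real hle hc, Real.volume_Icc, Real.volume_Icc]
  rw [show sSup X + c - sInf X = (sSup X - sInf X) + c by ring,
    ENNReal.ofReal_add (by linarith) hc]


/-! ### Fubini core in `ℝ × (Fin m → ℝ)` -/

variable {m : ℕ}

/-- the fiber of a subset of `ℝ × (Fin m → ℝ)` over a point of the second factor -/
def fib (X : Set (ℝ × (Fin m → ℝ))) (w : Fin m → ℝ) : Set ℝ := {t | (t, w) ∈ X}

lemma fib_eq_preimage (X : Set (ℝ × (Fin m → ℝ))) (w : Fin m → ℝ) :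
    fib X w = (fun t => (t, w)) ⁻¹' X := rfl

lemma fib_add_seg (X : Set (ℝ × (Fin m → ℝ))) (c : ℝ) (w : Fin m → ℝ) :
    fib (X + (Icc 0 c) ×ˢ ({0} : Set (Fin m → ℝ))) w = fib X w + Icc 0 c := by
  ext t
  constructor
  · rintro ⟨⟨p, q⟩, hpq, ⟨s, z⟩, ⟨hs, hz⟩, h⟩
    rw [Set.mem_singleton_iff] at hz
    subst hz
    have h1 : p + s = t := congrArg Prod.fst h
    have h2 : q = w := by
      have := congrArg Prod.snd h
      simpa using this
    subst h2
    exact ⟨p, hpq, s, hs, h1⟩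
  · rintro ⟨p, hp, s, hs, rfl⟩
    exact ⟨(p, w), hp, (s, 0), ⟨hs, rfl⟩, by ext <;> simp⟩

lemma vol_eq_lintegral_fib {X : Set (ℝ × (Fin m → ℝ))} (hX : MeasurableSet X) :
    volume X = ∫⁻ w, volume (fib X w) := by
  rw [Measure.volume_eq_prod, Measure.prod_apply_symm hX]
  rfl

lemma fib_compact {X : Set (ℝ × (Fin m → ℝ))} (hX : IsCompact X) (w : Fin m → ℝ) :
    IsCompact (fib X w) := by
  apply IsCompact.of_isClosed_subset (hX.image continuous_fst)
  · rw [fib_eq_preimage]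
    exact hX.isClosed.preimage (Continuous.prodMk_left w)
  · intro t ht
    exact ⟨(t, w), ht, rfl⟩

lemma fib_convex {X : Set (ℝ × (Fin m → ℝ))} (hX : Convex ℝ X) (w : Fin m → ℝ) :
    Convex ℝ (fib X w) := by
  intro x hx y hy a b ha hb hab
  have : (a • (x, w) + b • (y, w) : ℝ × (Fin m → ℝ)) ∈ X := hX hx hy ha hb hab
  simpa [fib, Set.mem_setOf_eq, Prod.ext_iff, Prod.smul_def, smul_eq_mul, hab, ← add_smul] using this

lemma fib_nonempty_iff (X : Set (ℝ × (Fin m → ℝ))) (w : Fin m → ℝ) :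
    (fib X w).Nonempty ↔ w ∈ Prod.snd '' X := by
  constructor
  · rintro ⟨t, ht⟩
    exact ⟨(t, w), ht, rfl⟩
  · rintro ⟨⟨t, w'⟩, h, rfl⟩
    exact ⟨t, h⟩

lemma vol_add_seg_le {A : Set (ℝ × (Fin m → ℝ))} (hA : IsCompact A) (hAc : Convex ℝ A)
    {c : ℝ} (hc : 0 ≤ c) :
    volume (A + (Icc 0 c) ×ˢ ({0} : Set (Fin m → ℝ))) ≤
      volume A + ENNReal.ofReal c * volume (Prod.snd '' A) := by
  have hAm := hA.measurableSet
  have hS : IsCompact ((Icc 0 c) ×ˢ ({0} : Set (Fin m → ℝ))) :=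
    isCompact_Icc.prod isCompact_singleton
  have hAS : IsCompact (A + (Icc 0 c) ×ˢ ({0} : Set (Fin m → ℝ))) := hA.add hS
  have hsnd : MeasurableSet (Prod.snd '' A) := (hA.image continuous_snd).measurableSet
  rw [vol_eq_lintegral_fib hAS.measurableSet, vol_eq_lintegral_fib hAm]
  have key : ∀ w, volume (fib (A + (Icc 0 c) ×ˢ ({0} : Set (Fin m → ℝ))) w) ≤
      volume (fib A w) + (Prod.snd '' A).indicator (fun _ => ENNReal.ofReal c) w := by
    intro w
    rw [fib_add_seg]
    by_cases hne : (fib A w).Nonempty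
    · have hw : w ∈ Prod.snd '' A := (fib_nonempty_iff A w).1 hne
      rw [Set.indicator_of_mem hw]
      exact ZonotopeSupermod.oneD_le (fib_compact hA w) (fib_convex hAc w) hne hc
    · rw [Set.not_nonempty_iff_eq_empty] at hne
      rw [hne]
      simp
  calc ∫⁻ w, volume (fib (A + (Icc 0 c) ×ˢ ({0} : Set (Fin m → ℝ))) w)
      ≤ ∫⁻ w, (volume (fib A w) +
          (Prod.snd '' A).indicator (fun _ => ENNReal.ofReal c) w) := lintegral_mono key
    _ = (∫⁻ w, volume (fib A w)) +
          ∫⁻ w, (Prod.snd '' A).indicator (fun _ => ENNReal.ofReal c) w :=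
        lintegral_add_left (measurable_measure_prodMk_right hAm) _
    _ = (∫⁻ w, volume (fib A w)) + ENNReal.ofReal c * volume (Prod.snd '' A) := by
        rw [lintegral_indicator_const hsnd]

lemma vol_add_seg_ge {Y : Set (ℝ × (Fin m → ℝ))} (hY : IsCompact Y)
    {c : ℝ} (hc : 0 ≤ c) :
    volume Y + ENNReal.ofReal c * volume (Prod.snd '' Y) ≤
      volume (Y + (Icc 0 c) ×ˢ ({0} : Set (Fin m → ℝ))) := by
  have hYm := hY.measurableSet
  have hS : IsCompact ((Icc 0 c) ×ˢ ({0} : Set (Fin m → ℝ))) :=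
    isCompact_Icc.prod isCompact_singleton
  have hYS : IsCompact (Y + (Icc 0 c) ×ˢ ({0} : Set (Fin m → ℝ))) := hY.add hS
  have hsnd : MeasurableSet (Prod.snd '' Y) := (hY.image continuous_snd).measurableSet
  rw [vol_eq_lintegral_fib hYS.measurableSet, vol_eq_lintegral_fib hYm]
  have key : ∀ w, volume (fib Y w) +
      (Prod.snd '' Y).indicator (fun _ => ENNReal.ofReal c) w ≤
      volume (fib (Y + (Icc 0 c) ×ˢ ({0} : Set (Fin m → ℝ))) w) := by
    intro w
    rw [fib_add_seg]
    by_cases hne : (fib Y w).Nonempty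
    · have hw : w ∈ Prod.snd '' Y := (fib_nonempty_iff Y w).1 hne
      rw [Set.indicator_of_mem hw]
      exact ZonotopeSupermod.oneD_ge (fib_compact hY w) hne hc
    · have hw : w ∉ Prod.snd '' Y := fun h => hne ((fib_nonempty_iff Y w).2 h)
      rw [Set.not_nonempty_iff_eq_empty] at hne
      rw [Set.indicator_of_notMem hw, hne]
      simp
  calc (∫⁻ w, volume (fib Y w)) + ENNReal.ofReal c * volume (Prod.snd '' Y)
      = ∫⁻ w, (volume (fib Y w) +
          (Prod.snd '' Y).indicator (fun _ => ENNReal.ofReal c) w) := by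
        rw [lintegral_add_left
          (show Measurable fun w => volume (fib Y w) from
            measurable_measure_prodMk_right hYm),
          lintegral_indicator_const hsnd]
    _ ≤ _ := lintegral_mono key

lemma core_seg {A C : Set (ℝ × (Fin m → ℝ))} (hAcp : IsCompact A) (hAcv : Convex ℝ A)
    (hCcp : IsCompact C) (hCne : C.Nonempty) {c : ℝ} (hc : 0 ≤ c) :
    volume (A + (Icc 0 c) ×ˢ ({0} : Set (Fin m → ℝ))) + volume (A + C) ≤
      volume (A + (Icc 0 c) ×ˢ ({0} : Set (Fin m → ℝ)) + C) + volume A := by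
  obtain ⟨c₀, hc₀⟩ := hCne
  have h1 := vol_add_seg_le hAcp hAcv hc
  have h2 := vol_add_seg_ge (hAcp.add hCcp) hc
  have h3 : volume (Prod.snd '' A) ≤ volume (Prod.snd '' (A + C)) := by
    have hsub : (fun w => w + c₀.2) '' (Prod.snd '' A) ⊆ Prod.snd '' (A + C) := by
      rintro _ ⟨_, ⟨a, ha, rfl⟩, rfl⟩
      exact ⟨a + c₀, ⟨a, ha, c₀, hc₀, rfl⟩, rfl⟩
    calc volume (Prod.snd '' A)
        = volume ((fun w => w + c₀.2) '' (Prod.snd '' A)) := by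
          rw [show (fun w => w + c₀.2) '' (Prod.snd '' A)
              = (fun w => w + -c₀.2) ⁻¹' (Prod.snd '' A) from Set.image_add_right,
            measure_preimage_add_right]
      _ ≤ volume (Prod.snd '' (A + C)) := measure_mono hsub
  have hAC : A + (Icc 0 c) ×ˢ ({0} : Set (Fin m → ℝ)) + C
      = A + C + (Icc 0 c) ×ˢ ({0} : Set (Fin m → ℝ)) := add_right_comm _ _ _
  rw [hAC]
  calc volume (A + (Icc 0 c) ×ˢ ({0} : Set (Fin m → ℝ))) + volume (A + C)
      ≤ (volume A + ENNReal.ofReal c * volume (Prod.snd '' A)) + volume (A + C) :=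
        add_le_add_left h1 _
    _ ≤ (volume A + ENNReal.ofReal c * volume (Prod.snd '' (A + C))) + volume (A + C) := by
        gcongr
    _ = (volume (A + C) + ENNReal.ofReal c * volume (Prod.snd '' (A + C))) + volume A := by
        ring
    _ ≤ volume (A + C + (Icc 0 c) ×ˢ ({0} : Set (Fin m → ℝ))) + volume A :=
        add_le_add_left h2 _


/-! ### Segment in the product space -/

lemma segment_prod_eq {c : ℝ} (hc : 0 ≤ c) :
    segment ℝ (0 : ℝ × (Fin m → ℝ)) (c, 0) = (Icc 0 c) ×ˢ ({0} : Set (Fin m → ℝ)) := by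
  ext ⟨p, q⟩
  constructor
  · rintro ⟨a, b, ha, hb, hab, h⟩
    rw [smul_zero, zero_add] at h
    have hp : b * c = p := congrArg Prod.fst h
    have hq : (0 : Fin m → ℝ) = q := by simpa using congrArg Prod.snd h
    have hb1 : b ≤ 1 := by linarith
    exact ⟨⟨by nlinarith, by nlinarith⟩, hq.symm⟩
  · rintro ⟨⟨hp0, hpc⟩, hq⟩
    subst hq
    rcases eq_or_lt_of_le hc with h | h
    · refine ⟨1, 0, zero_le_one, le_refl 0, add_zero 1, ?_⟩
      have hp : p = 0 := le_antisymm (by linarith) hp0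
      rw [smul_zero, zero_add, zero_smul, hp]
      rfl
    · refine ⟨1 - p / c, p / c, by
        have : p / c ≤ 1 := div_le_one_of_le₀ hpc hc
        linarith, div_nonneg hp0 hc, by ring, ?_⟩
      rw [smul_zero, zero_add, Prod.smul_mk, smul_eq_mul, smul_zero,
        div_mul_cancel₀ _ (ne_of_gt h)]

/-! ### Compactness of segments -/

lemma segment_compact {n : ℕ} (x y : EuclideanSpace ℝ (Fin n)) :
    IsCompact (segment ℝ x y) := by
  rw [segment_eq_image]
  exact isCompact_Icc.image
    (((continuous_const.sub continuous_id).smul continuous_const).add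
      (continuous_id.smul continuous_const))

/-! ### Segment lemma in Euclidean space -/

lemma seg_lemma {n : ℕ} {A C : Set (EuclideanSpace ℝ (Fin n))}
    (hAne : A.Nonempty) (hAcp : IsCompact A) (hAcv : Convex ℝ A)
    (hCne : C.Nonempty) (hCcp : IsCompact C) (u : EuclideanSpace ℝ (Fin n)) :
    volume (A + segment ℝ 0 u) + volume (A + C) ≤
      volume (A + segment ℝ 0 u + C) + volume A := by
  by_cases hu : u = (0 : EuclideanSpace ℝ (Fin n))
  · subst hu
    rw [segment_same]
    have h0 : A + ({0} : Set (EuclideanSpace ℝ (Fin n))) = A := by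
      simp [Set.add_singleton]
    rw [h0]
    exact le_of_eq (add_comm _ _)
  obtain ⟨m, rfl⟩ : ∃ m, n = m + 1 := by
    cases n with
    | zero => exact absurd (show u = 0 from Subsingleton.elim _ _) hu
    | succ m => exact ⟨m, rfl⟩
  have hnormpos : (0 : ℝ) < ‖u‖ := norm_pos_iff.2 hu
  -- orthonormal basis whose first vector is the direction of `u`
  have hcard : Module.finrank ℝ (EuclideanSpace ℝ (Fin (m + 1)))
      = Fintype.card (Fin (m + 1)) := by simp [finrank_euclideanSpace]
  have horth : Orthonormal ℝ (Set.restrict ({0} : Set (Fin (m + 1)))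
      (fun _ => (‖u‖⁻¹ • u : EuclideanSpace ℝ (Fin (m + 1))))) :=
    ⟨fun i => norm_smul_inv_norm hu, fun i j hij =>
      absurd (Subsingleton.elim i j) hij⟩
  obtain ⟨b, hb⟩ := horth.exists_orthonormalBasis_extension_of_card_eq hcard
  have hb0 : b 0 = ‖u‖⁻¹ • u := hb 0 rfl
  -- the composite coordinate map, as a measurable equivalence
  set Ξe : EuclideanSpace ℝ (Fin (m + 1)) ≃ᵐ ℝ × (Fin m → ℝ) :=
    (b.repr.toHomeomorph.toMeasurableEquiv.trans
      ((MeasurableEquiv.toLp 2 (Fin (m + 1) → ℝ)).symm.trans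
        (MeasurableEquiv.piFinSuccAbove (fun _ : Fin (m + 1) => ℝ) 0))) with hΞe
  set Ξ : EuclideanSpace ℝ (Fin (m + 1)) → ℝ × (Fin m → ℝ) := ⇑Ξe with hΞ
  have hΞdef : ∀ x, Ξ x =
      (MeasurableEquiv.piFinSuccAbove (fun _ : Fin (m + 1) => ℝ) 0)
        ((MeasurableEquiv.toLp 2 (Fin (m + 1) → ℝ)).symm (b.repr x)) := fun x => rfl
  have hmp : MeasurePreserving Ξe volume volume :=
    ((volume_preserving_piFinSuccAbove (fun _ : Fin (m + 1) => ℝ) 0).comp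
      ((EuclideanSpace.volume_preserving_symm_measurableEquiv_toLp (Fin (m + 1))).comp
        b.measurePreserving_repr))
  have hadd : ∀ x y, Ξ (x + y) = Ξ x + Ξ y := by
    intro x y
    rw [hΞdef, hΞdef, hΞdef, map_add]
    rfl
  have hsmul : ∀ (r : ℝ) x, Ξ (r • x) = r • Ξ x := by
    intro r x
    rw [hΞdef, hΞdef, _root_.map_smul]
    rfl
  have hcont : Continuous Ξ := by
    rw [hΞ]
    have h3 : Continuous (MeasurableEquiv.piFinSuccAbove (fun _ : Fin (m + 1) => ℝ) 0) := by
      simp only [MeasurableEquiv.piFinSuccAbove_apply]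
      exact (continuous_apply _).prodMk (continuous_pi fun j => continuous_apply _)
    have h2 : Continuous (MeasurableEquiv.toLp 2 (Fin (m + 1) → ℝ)).symm := by
      rw [MeasurableEquiv.coe_toLp_symm]
      exact PiLp.continuous_ofLp 2 _
    exact h3.comp (h2.comp b.repr.continuous)
  -- the image of `u`
  have hΞu : Ξ u = ((‖u‖ : ℝ), (0 : Fin m → ℝ)) := by
    have hu' : u = ‖u‖ • b 0 := by
      rw [hb0, smul_smul, mul_inv_cancel₀ (ne_of_gt hnormpos), one_smul]
    rw [hΞdef]
    conv_lhs => rw [hu']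
    rw [_root_.map_smul, b.repr_self]
    ext
    · simp [MeasurableEquiv.piFinSuccAbove_apply, MeasurableEquiv.toLp_symm_apply,
        EuclideanSpace.single_apply]
    · simp [MeasurableEquiv.piFinSuccAbove_apply, MeasurableEquiv.toLp_symm_apply,
        EuclideanSpace.single_apply, Fin.succAbove_ne_zero, Fin.tail, Pi.single_apply,
        Fin.succ_ne_zero]
  -- volume transfer
  have hvol : ∀ X : Set (EuclideanSpace ℝ (Fin (m + 1))), MeasurableSet X →
      volume (Ξ '' X) = volume X := by
    intro X hX
    rw [hΞ, show ⇑Ξe '' X = Ξe.symm ⁻¹' X from Ξe.image_eq_preimage_symm X]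
    exact (hmp.symm Ξe).measure_preimage hX.nullMeasurableSet
  -- compactness facts
  have hScp : IsCompact (segment ℝ (0 : EuclideanSpace ℝ (Fin (m + 1))) u) :=
    segment_compact 0 u
  have hSp : Ξ '' segment ℝ 0 u = (Icc 0 ‖u‖) ×ˢ ({0} : Set (Fin m → ℝ)) := by
    rw [image_segment_of_linearish Ξ hadd hsmul, hΞu, segment_prod_eq (norm_nonneg u)]
  have h := core_seg (hAcp.image hcont)
    (convex_image_of_linearish Ξ hadd hsmul hAcv)
    (hCcp.image hcont) (hCne.image Ξ) (norm_nonneg u)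
  rw [← hSp, ← image_add_of_addhom Ξ hadd A (segment ℝ 0 u),
    ← image_add_of_addhom Ξ hadd A C,
    ← image_add_of_addhom Ξ hadd (A + segment ℝ 0 u) C,
    hvol _ (hAcp.add hScp).measurableSet,
    hvol _ (hAcp.add hCcp).measurableSet,
    hvol _ ((hAcp.add hScp).add hCcp).measurableSet,
    hvol _ hAcp.measurableSet] at h
  exact h

/-! ### toReal arithmetic -/

lemma toReal_add_le_toReal_add {a b c d : ℝ≥0∞} (h : a + b ≤ c + d)
    (hc : c ≠ ⊤) (hd : d ≠ ⊤) :
    a.toReal + b.toReal ≤ c.toReal + d.toReal := by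
  have hcd : c + d ≠ ⊤ := ENNReal.add_ne_top.2 ⟨hc, hd⟩
  have ha : a ≠ ⊤ := ne_top_of_le_ne_top hcd (le_trans le_self_add h)
  have hb : b ≠ ⊤ := ne_top_of_le_ne_top hcd (le_trans le_add_self h)
  rw [← ENNReal.toReal_add ha hb, ← ENNReal.toReal_add hc hd]
  exact ENNReal.toReal_mono hcd h

lemma seg_lemma_real {n : ℕ} {A C : Set (EuclideanSpace ℝ (Fin n))}
    (hAne : A.Nonempty) (hAcp : IsCompact A) (hAcv : Convex ℝ A)
    (hCne : C.Nonempty) (hCcp : IsCompact C) (u : EuclideanSpace ℝ (Fin n)) :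
    (volume (A + segment ℝ 0 u)).toReal + (volume (A + C)).toReal ≤
      (volume (A + segment ℝ 0 u + C)).toReal + (volume A).toReal :=
  toReal_add_le_toReal_add (seg_lemma hAne hAcp hAcv hCne hCcp u)
    (((hAcp.add (segment_compact 0 u)).add hCcp).measure_lt_top).ne
    (hAcp.measure_lt_top).ne

/-! ### Main induction -/

lemma key {n : ℕ} : ∀ (N : ℕ) (u : Fin N → EuclideanSpace ℝ (Fin n))
    (A C : Set (EuclideanSpace ℝ (Fin n))), A.Nonempty → IsCompact A → Convex ℝ A →
    C.Nonempty → IsCompact C →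
    (volume (A + ∑ i : Fin N, segment ℝ 0 (u i))).toReal + (volume (A + C)).toReal ≤
      (volume (A + (∑ i : Fin N, segment ℝ 0 (u i)) + C)).toReal + (volume A).toReal := by
  intro N
  induction N with
  | zero =>
    intro u A C _ _ _ _ _
    simp only [Finset.univ_eq_empty, Finset.sum_empty, add_zero]
    linarith
  | succ N ih =>
    intro u A C hAne hAcp hAcv hCne hCcp
    have hScp : IsCompact (segment ℝ (0 : EuclideanSpace ℝ (Fin n)) (u 0)) :=
      segment_compact 0 (u 0)
    have hSne : (segment ℝ (0 : EuclideanSpace ℝ (Fin n)) (u 0)).Nonempty :=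
      ⟨0, left_mem_segment ℝ 0 (u 0)⟩
    have h1 := ih (fun i => u i.succ) (A + segment ℝ 0 (u 0)) C
      (hAne.add hSne) (hAcp.add hScp) (hAcv.add (convex_segment 0 (u 0))) hCne hCcp
    have h2 := seg_lemma_real hAne hAcp hAcv hCne hCcp (u 0)
    rw [Fin.sum_univ_succ, ← add_assoc]
    linarith

end ZonotopeSupermod

/-- Supermodularity of volume with a zonotope summand: if `A ⊂ ℝ^n` is nonempty compact
convex, `B = [0,u₁] + ⋯ + [0,u_N]` is a zonotope, and `C ⊂ ℝ^n` is nonempty compact, then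
`|A + B + C| + |A| ≥ |A + B| + |A + C|`. -/
theorem volume_supermodular_zonotope
    (n N : ℕ) (A C : Set (EuclideanSpace ℝ (Fin n)))
    (u : Fin N → EuclideanSpace ℝ (Fin n))
    (B : Set (EuclideanSpace ℝ (Fin n)))
    (hB : B = ∑ i : Fin N, segment ℝ 0 (u i))
    (hAne : A.Nonempty) (hAcp : IsCompact A) (hAcv : Convex ℝ A)
    (hCne : C.Nonempty) (hCcp : IsCompact C) :
    (volume (A + B + C)).toReal + (volume A).toReal ≥
      (volume (A + B)).toReal + (volume (A + C)).toReal := by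
  subst hB
  exact ZonotopeSupermod.key N u A C hAne hAcp hAcv hCne hCcp
end

section
/- Let n ≥ 2 be an integer, let K be a nonempty compact subset of ℝ^n, and let u be a unit vector in ℝ^n. Then |K + B| · H^{n−1}(B ∩ u^⊥) ≥ |B| · H^{n−1}(P_{u^⊥}(K + B)), where B is the closed Euclidean unit ball of ℝ^n, u^⊥ = {x ∈ ℝ^n : x·u = 0}, P_{u^⊥} is the orthogonal projection onto the hyperplane u^⊥, H^{n−1} denotes (n−1)-dimensional Hausdorff measure, and |·| denotes n-dimensional Lebesgue measure. (Equivalently, |K + B| / H^{n−1}(P_{u^⊥}(K + B)) ≥ |B| / H^{n−1}(B ∩ u^⊥), the right-hand ratio being the volume of the unit ball divided by the volume of the (n−1)-dimensional unit ball.) -/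
open scoped Pointwise
open scoped ENNReal NNReal
open MeasureTheory
open Metric Set

noncomputable section

namespace PP
variable {m : ℕ}

def sn (y : EuclideanSpace ℝ (Fin m)) (t : ℝ) : EuclideanSpace ℝ (Fin (m+1)) :=
  WithLp.toLp 2 (Fin.snoc (fun i => y i) t : Fin (m+1) → ℝ)

def pr (x : EuclideanSpace ℝ (Fin (m+1))) : EuclideanSpace ℝ (Fin m) :=
  WithLp.toLp 2 (fun i : Fin m => x i.castSucc)

lemma normsq {k : ℕ} (x : EuclideanSpace ℝ (Fin k)) : ‖x‖^2 = ∑ i, x i ^ 2 := by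
  rw [EuclideanSpace.norm_eq, Real.sq_sqrt (by positivity)]
  simp [Real.norm_eq_abs, sq_abs]

lemma sn_sub (y z : EuclideanSpace ℝ (Fin m)) (t s : ℝ) :
    sn y t - sn z s = sn (y - z) (t - s) := by
  ext i
  simp only [sn]
  refine Fin.lastCases ?_ ?_ i
  · simp [PiLp.sub_apply]
  · intro j; simp [PiLp.sub_apply]

lemma normsq_sn (y : EuclideanSpace ℝ (Fin m)) (t : ℝ) : ‖sn y t‖^2 = ‖y‖^2 + t^2 := by
  rw [normsq, normsq, Fin.sum_univ_castSucc]
  simp [sn, Fin.snoc_castSucc, Fin.snoc_last]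

lemma sn_pr (x : EuclideanSpace ℝ (Fin (m+1))) : sn (pr x) (x (Fin.last m)) = x := by
  ext i
  refine Fin.lastCases ?_ ?_ i
  · simp [sn, Fin.snoc_last]
  · intro j; simp [sn, pr, Fin.snoc_castSucc]

lemma pr_sub (x z : EuclideanSpace ℝ (Fin (m+1))) : pr x - pr z = pr (x - z) := by
  ext i; simp [pr, PiLp.sub_apply]

lemma norm_pr_le (x : EuclideanSpace ℝ (Fin (m+1))) : ‖pr x‖ ≤ ‖x‖ := by
  have h : ‖pr x‖^2 ≤ ‖x‖^2 := by
    rw [normsq, normsq, Fin.sum_univ_castSucc]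
    have : (0:ℝ) ≤ x (Fin.last m) ^ 2 := sq_nonneg _
    simp only [pr, PiLp.toLp_apply]
    linarith
  have h1 : (0:ℝ) ≤ ‖pr x‖ := norm_nonneg _
  nlinarith [norm_nonneg x]

lemma pr_lipschitz : LipschitzWith 1 (pr (m := m)) := by
  refine LipschitzWith.of_dist_le_mul fun x z => ?_
  rw [dist_eq_norm, dist_eq_norm, pr_sub]
  simpa using norm_pr_le (x - z)

lemma pr_continuous : Continuous (pr (m := m)) := pr_lipschitz.continuous

/-- fiber of the closed unit ball -/
lemma fiber_ball (y : EuclideanSpace ℝ (Fin m)) :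
    volume {t : ℝ | sn y t ∈ closedBall (0 : EuclideanSpace ℝ (Fin (m+1))) 1}
      = ENNReal.ofReal (2 * Real.sqrt (1 - ‖y‖^2)) := by
  have hset : {t : ℝ | sn y t ∈ closedBall (0 : EuclideanSpace ℝ (Fin (m+1))) 1}
      = {t : ℝ | t^2 ≤ 1 - ‖y‖^2} := by
    ext t
    simp only [Set.mem_setOf_eq, mem_closedBall_zero_iff]
    constructor
    · intro h
      have := normsq_sn y t
      nlinarith [norm_nonneg (sn y t)]
    · intro h
      have h2 : ‖sn y t‖^2 ≤ 1 := by rw [normsq_sn]; linarith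
      nlinarith [norm_nonneg (sn y t)]
  rw [hset]
  rcases le_or_gt 0 (1 - ‖y‖^2) with hc | hc
  · have h2 : {t : ℝ | t^2 ≤ 1 - ‖y‖^2}
        = Set.Icc (-Real.sqrt (1 - ‖y‖^2)) (Real.sqrt (1 - ‖y‖^2)) := by
      ext t
      simp only [Set.mem_setOf_eq, Set.mem_Icc, ← abs_le]
      rw [← Real.sqrt_sq_eq_abs]
      constructor
      · intro h; exact Real.sqrt_le_sqrt h
      · intro h
        have := Real.sqrt_le_sqrt (sq_nonneg t) -- dummy
        nlinarith [Real.sq_sqrt hc, Real.sq_sqrt (sq_nonneg t), Real.sqrt_nonneg (t^2),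
          Real.sqrt_nonneg (1 - ‖y‖^2)]
    rw [h2, Real.volume_Icc]
    congr 1
    ring
  · have h2 : {t : ℝ | t^2 ≤ 1 - ‖y‖^2} = (∅ : Set ℝ) := by
      ext t; simp only [Set.mem_setOf_eq, Set.mem_empty_iff_false, iff_false, not_le]
      nlinarith [sq_nonneg t]
    rw [h2, measure_empty, Real.sqrt_eq_zero_of_nonpos hc.le, mul_zero, ENNReal.ofReal_zero]

/-- fiber of `K + B` is at least an interval of length `2√(1-d(y, pr K)²)` -/
lemma fiber_lower {K : Set (EuclideanSpace ℝ (Fin (m+1)))} (hKc : IsCompact K)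
    (hKne : K.Nonempty) (y : EuclideanSpace ℝ (Fin m)) :
    ENNReal.ofReal (2 * Real.sqrt (1 - (infDist y (pr '' K))^2))
      ≤ volume {t : ℝ | sn y t ∈ K + closedBall (0 : EuclideanSpace ℝ (Fin (m+1))) 1} := by
  set d := infDist y (pr '' K) with hd
  rcases lt_or_ge (1:ℝ) d with hd1 | hd1
  · have : Real.sqrt (1 - d^2) = 0 := by
      apply Real.sqrt_eq_zero_of_nonpos; nlinarith [infDist_nonneg (x := y) (s := pr '' K)]
    simp [this]
  · have hd0 : 0 ≤ d := infDist_nonneg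
    have hc : 0 ≤ 1 - d^2 := by nlinarith
    set s := Real.sqrt (1 - d^2) with hs
    have hs0 : 0 ≤ s := Real.sqrt_nonneg _
    have hssq : s^2 = 1 - d^2 := Real.sq_sqrt hc
    obtain ⟨p, hpmem, hdp⟩ :=
      (hKc.image pr_continuous).exists_infDist_eq_dist (hKne.image _) y
    obtain ⟨k, hkK, hkp⟩ := hpmem
    have hsub : Set.Icc (k (Fin.last m) - s) (k (Fin.last m) + s)
        ⊆ {t : ℝ | sn y t ∈ K + closedBall (0 : EuclideanSpace ℝ (Fin (m+1))) 1} := by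
      intro t ht
      simp only [Set.mem_Icc] at ht
      have habs : |t - k (Fin.last m)| ≤ s := abs_le.2 ⟨by linarith [ht.1], by linarith [ht.2]⟩
      set b := sn y t - k with hb
      have hbeq : b = sn (y - pr k) (t - k (Fin.last m)) := by
        rw [hb, ← sn_sub]
        congr 1
        exact (sn_pr k).symm
      have hnb : ‖b‖^2 ≤ 1 := by
        rw [hbeq, normsq_sn]
        have h1 : ‖y - pr k‖ = d := by
          rw [hd, hdp, dist_eq_norm, hkp]
        have h2 : (t - k (Fin.last m))^2 ≤ s^2 := by
          rw [← Real.sqrt_sq_eq_abs] at habs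
          nlinarith [Real.sq_sqrt (sq_nonneg (t - k (Fin.last m))),
            Real.sqrt_nonneg ((t - k (Fin.last m))^2)]
        rw [h1]
        nlinarith
      have hb1 : ‖b‖ ≤ 1 := by nlinarith [norm_nonneg b]
      refine Set.mem_add.2 ⟨k, hkK, b, ?_, ?_⟩
      · rwa [mem_closedBall_zero_iff]
      · rw [hb]; abel
    calc ENNReal.ofReal (2 * s)
        = volume (Set.Icc (k (Fin.last m) - s) (k (Fin.last m) + s)) := by
          rw [Real.volume_Icc]; congr 1; ring
      _ ≤ _ := measure_mono hsub

def Θ : EuclideanSpace ℝ (Fin (m+1)) ≃ᵐ ℝ × EuclideanSpace ℝ (Fin m) :=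
  ((MeasurableEquiv.toLp 2 (Fin (m+1) → ℝ)).symm).trans
    ((MeasurableEquiv.piFinSuccAbove (fun _ => ℝ) (Fin.last m)).trans
      ((MeasurableEquiv.refl ℝ).prodCongr ((MeasurableEquiv.toLp 2 (Fin m → ℝ)).symm).symm))

lemma Θ_apply (x : EuclideanSpace ℝ (Fin (m+1))) : Θ x = (x (Fin.last m), pr x) := by
  show ((MeasurableEquiv.refl ℝ).prodCongr ((MeasurableEquiv.toLp 2 (Fin m → ℝ)).symm).symm)
    ((MeasurableEquiv.piFinSuccAbove (fun _ => ℝ) (Fin.last m))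
      (((MeasurableEquiv.toLp 2 (Fin (m+1) → ℝ)).symm) x)) = _
  simp only [MeasurableEquiv.piFinSuccAbove, MeasurableEquiv.prodCongr, MeasurableEquiv.coe_mk,
    MeasurableEquiv.refl]
  ext <;> simp [pr, Fin.init, Fin.succAbove_last, MeasurableEquiv.coe_toLp,
    MeasurableEquiv.coe_toLp_symm]

lemma measurePreserving_Θ : MeasurePreserving (Θ (m := m)) volume volume := by
  refine ((EuclideanSpace.volume_preserving_symm_measurableEquiv_toLp (Fin (m+1))).trans ?_)
  refine (volume_preserving_piFinSuccAbove (fun _ : Fin (m+1) => ℝ) (Fin.last m)).trans ?_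
  have h1 : MeasurePreserving ((MeasurableEquiv.toLp 2 (Fin m → ℝ)).symm).symm volume volume :=
    (EuclideanSpace.volume_preserving_symm_measurableEquiv_toLp (Fin m)).symm _
  have := (MeasurePreserving.id (volume : Measure ℝ)).prod h1
  rw [← Measure.volume_eq_prod, ← Measure.volume_eq_prod] at this
  exact this

lemma Θ_sn (y : EuclideanSpace ℝ (Fin m)) (t : ℝ) : Θ (sn y t) = (t, y) := by
  rw [Θ_apply]
  refine Prod.ext ?_ ?_
  · simp [sn, Fin.snoc_last]
  · ext i; simp [sn, pr, Fin.snoc_castSucc]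

lemma slice {S : Set (EuclideanSpace ℝ (Fin (m+1)))} (hS : MeasurableSet S) :
    volume S = ∫⁻ y : EuclideanSpace ℝ (Fin m), volume {t : ℝ | sn y t ∈ S} := by
  have hmp := measurePreserving_Θ (m := m)
  have hA : MeasurableSet ((Θ (m := m)).symm ⁻¹' S) :=
    (Θ (m := m)).symm.measurable hS
  have h1 : volume S = volume ((Θ (m := m)).symm ⁻¹' S) :=
    (hmp.symm (Θ (m := m))).measure_preimage hS.nullMeasurableSet |>.symm
  rw [h1, Measure.volume_eq_prod, Measure.prod_apply_symm hA]
  refine lintegral_congr fun y => ?_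
  congr 1
  ext t
  simp only [Set.mem_preimage, Set.mem_setOf_eq]
  constructor
  · intro h
    have : (Θ (m := m)).symm (t, y) = sn y t := by
      rw [← Θ_sn y t, MeasurableEquiv.symm_apply_apply]
    rwa [this] at h
  · intro h
    have : (Θ (m := m)).symm (t, y) = sn y t := by
      rw [← Θ_sn y t, MeasurableEquiv.symm_apply_apply]
    rwa [this]

-- auxiliary real inequality
lemma aux_lt {c tt : ℝ} (ht : 0 < tt) : tt < 2 * Real.sqrt c ↔ tt^2/4 < c := by
  constructor
  · intro h
    have hsq : 0 < Real.sqrt c := by linarith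
    have hc : 0 < c := Real.sqrt_pos.1 hsq
    have h2 : tt/2 < Real.sqrt c := by linarith
    have := Real.sq_sqrt hc.le
    nlinarith
  · intro h
    have hc : 0 < c := lt_of_le_of_lt (by positivity) h
    have h1 : Real.sqrt (tt^2/4) < Real.sqrt c := Real.sqrt_lt_sqrt (by positivity) h
    have h2 : Real.sqrt (tt^2/4) = tt/2 := by
      rw [show tt^2/4 = (tt/2)^2 by ring, Real.sqrt_sq (by linarith)]
    linarith

section inner_lemma
variable {F : Type*} [NormedAddCommGroup F] [InnerProductSpace ℝ F]

lemma inner_nearest_nonneg (x z ax az : F) (h1 : ‖x - ax‖ ≤ ‖x - az‖)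
    (h2 : ‖z - az‖ ≤ ‖z - ax‖) : 0 ≤ (inner ℝ (x - z) (ax - az) : ℝ) := by
  have e1 : ‖x - ax‖^2 ≤ ‖x - az‖^2 := by
    have := norm_nonneg (x - ax); nlinarith
  have e2 : ‖z - az‖^2 ≤ ‖z - ax‖^2 := by
    have := norm_nonneg (z - az); nlinarith
  rw [norm_sub_sq_real, norm_sub_sq_real] at e1 e2
  have hg : (inner ℝ (x - z) (ax - az) : ℝ)
      = inner ℝ x ax - inner ℝ x az - (inner ℝ z ax - inner ℝ z az) := by
    simp [inner_sub_left, inner_sub_right]; ring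
  have hsym1 : (inner ℝ z ax : ℝ) = inner ℝ ax z := real_inner_comm _ _
  linarith [e1, e2]

lemma norm_smul_add_smul_sq (r : ℝ) (v w : F) :
    ‖r • v + (1 - r) • w‖^2
      = r^2 * ‖v‖^2 + 2 * (r * (1 - r)) * (inner ℝ v w : ℝ) + (1 - r)^2 * ‖w‖^2 := by
  rw [norm_add_sq_real, norm_smul, norm_smul, real_inner_smul_left, real_inner_smul_right]
  simp [Real.norm_eq_abs, mul_pow, sq_abs]
  ring

end inner_lemma

/-- Kneser-type inequality via a contraction toward nearest points, in Hausdorff measure. -/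
lemma kneser_muH {A : Set (EuclideanSpace ℝ (Fin m))} (hA : IsCompact A) (hAne : A.Nonempty)
    {r : ℝ} (hr0 : 0 < r) (hr1 : r ≤ 1) :
    (μH[(m:ℝ)] (A + closedBall (0 : EuclideanSpace ℝ (Fin m)) 1))
      ≤ ((r.toNNReal⁻¹ : ℝ≥0) : ℝ≥0∞) ^ (m:ℝ)
        * μH[(m:ℝ)] (A + closedBall (0 : EuclideanSpace ℝ (Fin m)) r) := by
  classical
  -- nearest point selection
  have hsel : ∀ x : EuclideanSpace ℝ (Fin m), ∃ p, p ∈ A ∧ infDist x A = dist x p := by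
    intro x
    obtain ⟨p, hp, hdp⟩ := hA.exists_infDist_eq_dist hAne x
    exact ⟨p, hp, hdp⟩
  set a : EuclideanSpace ℝ (Fin m) → EuclideanSpace ℝ (Fin m) :=
    fun x => (hsel x).choose with ha
  have haA : ∀ x, a x ∈ A := fun x => (hsel x).choose_spec.1
  have hadist : ∀ x, infDist x A = dist x (a x) := fun x => (hsel x).choose_spec.2
  set Φ : EuclideanSpace ℝ (Fin m) → EuclideanSpace ℝ (Fin m) :=
    fun x => a x + r • (x - a x) with hΦ
  -- anti-Lipschitz bound
  have hanti : AntilipschitzWith (r.toNNReal)⁻¹ Φ := by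
    refine AntilipschitzWith.of_le_mul_dist fun x z => ?_
    have hkey : r * dist x z ≤ dist (Φ x) (Φ z) := by
      have hdiff : Φ x - Φ z = r • (x - z) + (1 - r) • (a x - a z) := by
        simp only [hΦ]
        module
      have hinner : 0 ≤ (inner ℝ (x - z) (a x - a z) : ℝ) := by
        refine inner_nearest_nonneg x z (a x) (a z) ?_ ?_
        · rw [← dist_eq_norm, ← dist_eq_norm, ← hadist x]
          exact infDist_le_dist_of_mem (haA z)
        · rw [← dist_eq_norm, ← dist_eq_norm, ← hadist z]
          exact infDist_le_dist_of_mem (haA x)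
      have hsq : (r * dist x z)^2 ≤ dist (Φ x) (Φ z)^2 := by
        rw [dist_eq_norm, dist_eq_norm, hdiff, norm_smul_add_smul_sq]
        have h1 : (0:ℝ) ≤ ‖a x - a z‖^2 := sq_nonneg _
        have h2 : 0 ≤ r * (1 - r) := mul_nonneg hr0.le (by linarith)
        nlinarith [hinner]
      have h0 : 0 ≤ r * dist x z := mul_nonneg hr0.le dist_nonneg
      nlinarith [dist_nonneg (x := Φ x) (y := Φ z)]
    rw [NNReal.coe_inv, Real.coe_toNNReal _ hr0.le]
    rw [inv_mul_eq_div, le_div_iff₀ hr0]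
    linarith [hkey]
  -- image inclusion
  have himg : Φ '' (A + closedBall (0 : EuclideanSpace ℝ (Fin m)) 1)
      ⊆ A + closedBall (0 : EuclideanSpace ℝ (Fin m)) r := by
    rintro _ ⟨x, hx, rfl⟩
    have hxd : infDist x A ≤ 1 := by
      obtain ⟨p, hp, b, hb, rfl⟩ := Set.mem_add.1 hx
      calc infDist (p + b) A ≤ dist (p + b) p := infDist_le_dist_of_mem hp
        _ = ‖b‖ := by rw [dist_eq_norm]; congr 1; abel
        _ ≤ 1 := mem_closedBall_zero_iff.1 hb
    refine Set.mem_add.2 ⟨a x, haA x, r • (x - a x), ?_, by simp [hΦ]⟩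
    rw [mem_closedBall_zero_iff, norm_smul, Real.norm_eq_abs, abs_of_pos hr0]
    have : ‖x - a x‖ ≤ 1 := by rw [← dist_eq_norm, ← hadist x]; exact hxd
    nlinarith
  calc μH[(m:ℝ)] (A + closedBall (0 : EuclideanSpace ℝ (Fin m)) 1)
      ≤ ((r.toNNReal⁻¹ : ℝ≥0) : ℝ≥0∞) ^ (m:ℝ)
        * μH[(m:ℝ)] (Φ '' (A + closedBall (0 : EuclideanSpace ℝ (Fin m)) 1)) :=
        hanti.le_hausdorffMeasure_image (by positivity) _
    _ ≤ _ := mul_le_mul_right (measure_mono himg) _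



lemma muH_eq_smul_volume :
    ∃ c : ℝ≥0, 0 < c ∧
      (μH[(m:ℝ)] : Measure (EuclideanSpace ℝ (Fin m))) = c • volume := by
  have hfr : Module.finrank ℝ (EuclideanSpace ℝ (Fin m)) = m := finrank_euclideanSpace_fin
  haveI inst : (μH[(m:ℝ)] : Measure (EuclideanSpace ℝ (Fin m))).IsAddHaarMeasure := by
    have := MeasureTheory.isAddHaarMeasure_hausdorffMeasure
      (E := EuclideanSpace ℝ (Fin m))
    rwa [hfr] at this
  exact ⟨Measure.addHaarScalarFactor (μH[(m:ℝ)] : Measure (EuclideanSpace ℝ (Fin m))) volume,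
    Measure.addHaarScalarFactor_pos_of_isAddHaarMeasure _ _,
    Measure.isAddLeftInvariant_eq_smul _ _⟩

/-- Kneser's inequality for Lebesgue measure. -/
lemma kneser_volume {A : Set (EuclideanSpace ℝ (Fin m))} (hA : IsCompact A) (hAne : A.Nonempty)
    {r : ℝ} (hr0 : 0 < r) (hr1 : r ≤ 1) :
    ENNReal.ofReal (r^m) * volume (A + closedBall (0 : EuclideanSpace ℝ (Fin m)) 1)
      ≤ volume (A + closedBall (0 : EuclideanSpace ℝ (Fin m)) r) := by
  obtain ⟨c, hc0, hceq⟩ := muH_eq_smul_volume (m := m)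
  have hK := kneser_muH hA hAne hr0 hr1
  rw [hceq] at hK
  simp only [Measure.smul_apply, ENNReal.smul_def, smul_eq_mul] at hK
  set x : ℝ≥0∞ := (r.toNNReal : ℝ≥0∞) with hx
  have hx0 : x ≠ 0 := by
    simp [hx, ENNReal.coe_ne_zero, Real.toNNReal_eq_zero, not_le, hr0]
  have hxtop : x ≠ ∞ := ENNReal.coe_ne_top
  have hcoe : ((r.toNNReal⁻¹ : ℝ≥0) : ℝ≥0∞) = x⁻¹ := by
    rw [ENNReal.coe_inv (by simpa [Real.toNNReal_eq_zero, not_le] using hr0)]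
  rw [hcoe, ENNReal.rpow_natCast] at hK
  have hK2 : volume (A + closedBall (0 : EuclideanSpace ℝ (Fin m)) 1)
      ≤ x⁻¹ ^ m * volume (A + closedBall (0 : EuclideanSpace ℝ (Fin m)) r) := by
    rw [← mul_assoc, mul_comm (x⁻¹ ^ m) (c : ℝ≥0∞), mul_assoc] at hK
    exact (ENNReal.mul_le_mul_iff_right (by exact_mod_cast hc0.ne') ENNReal.coe_ne_top).1 hK
  have hofreal : ENNReal.ofReal (r^m) = x ^ m := by
    rw [hx, ← ENNReal.coe_pow]
    rw [ENNReal.ofReal, Real.toNNReal_pow hr0.le]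
  calc ENNReal.ofReal (r^m) * volume (A + closedBall (0 : EuclideanSpace ℝ (Fin m)) 1)
      ≤ ENNReal.ofReal (r^m) * (x⁻¹ ^ m * volume (A + closedBall (0 : EuclideanSpace ℝ (Fin m)) r)) :=
        mul_le_mul_right hK2 _
    _ = (x ^ m * x⁻¹ ^ m) * volume (A + closedBall (0 : EuclideanSpace ℝ (Fin m)) r) := by
        rw [hofreal, mul_assoc]
    _ = volume (A + closedBall (0 : EuclideanSpace ℝ (Fin m)) r) := by
        rw [← ENNReal.inv_pow, ENNReal.mul_inv_cancel (pow_ne_zero m hx0)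
          (ENNReal.pow_ne_top hxtop), one_mul]

lemma ball_level (t : ℝ) (ht0 : 0 < t) (ht2 : t < 2) :
    {y : EuclideanSpace ℝ (Fin m) | t < 2 * Real.sqrt (1 - ‖y‖^2)}
      = ball (0 : EuclideanSpace ℝ (Fin m)) (Real.sqrt (1 - t^2/4)) := by
  have hr2 : Real.sqrt (1 - t^2/4) ^ 2 = 1 - t^2/4 := Real.sq_sqrt (by nlinarith)
  have hr0 : 0 < Real.sqrt (1 - t^2/4) := Real.sqrt_pos.2 (by nlinarith)
  ext y
  simp only [Set.mem_setOf_eq, mem_ball_zero_iff]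
  rw [aux_lt ht0]
  constructor
  · intro h
    nlinarith [norm_nonneg y]
  · intro h
    nlinarith [norm_nonneg y]

lemma dist_level {Kp : Set (EuclideanSpace ℝ (Fin m))} (t : ℝ) (ht0 : 0 < t) (ht2 : t < 2)
    {r' : ℝ} (hr'0 : 0 < r') (hr' : r' < Real.sqrt (1 - t^2/4)) :
    Kp + closedBall (0 : EuclideanSpace ℝ (Fin m)) r'
      ⊆ {y : EuclideanSpace ℝ (Fin m) | t < 2 * Real.sqrt (1 - (infDist y Kp)^2)} := by
  have hr2 : Real.sqrt (1 - t^2/4) ^ 2 = 1 - t^2/4 := Real.sq_sqrt (by nlinarith)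
  rintro y hy
  obtain ⟨p, hp, b, hb, rfl⟩ := Set.mem_add.1 hy
  rw [mem_closedBall_zero_iff] at hb
  have hd : infDist (p + b) Kp ≤ r' := by
    calc infDist (p + b) Kp ≤ dist (p + b) p := infDist_le_dist_of_mem hp
      _ = ‖b‖ := by rw [dist_eq_norm]; congr 1; abel
      _ ≤ r' := hb
  have hd0 : 0 ≤ infDist (p + b) Kp := infDist_nonneg
  simp only [Set.mem_setOf_eq]
  rw [aux_lt ht0]
  nlinarith [Real.sqrt_nonneg (1 - t^2/4)]

/-- key per-level-set inequality -/
lemma level_master {Kp : Set (EuclideanSpace ℝ (Fin m))} (hKp : IsCompact Kp)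
    (hKpne : Kp.Nonempty) {t : ℝ} (ht0 : 0 < t) :
    volume (Kp + closedBall (0 : EuclideanSpace ℝ (Fin m)) 1)
        * volume {y : EuclideanSpace ℝ (Fin m) | t < 2 * Real.sqrt (1 - ‖y‖^2)}
      ≤ volume (closedBall (0 : EuclideanSpace ℝ (Fin m)) 1)
        * volume {y : EuclideanSpace ℝ (Fin m) | t < 2 * Real.sqrt (1 - (infDist y Kp)^2)} := by
  rcases le_or_gt 2 t with ht2 | ht2
  · have hempty : {y : EuclideanSpace ℝ (Fin m) | t < 2 * Real.sqrt (1 - ‖y‖^2)} = ∅ := by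
      ext y
      simp only [Set.mem_setOf_eq, Set.mem_empty_iff_false, iff_false, not_lt]
      have h1 : Real.sqrt (1 - ‖y‖^2) ≤ 1 := by
        rw [show (1:ℝ) = Real.sqrt 1 by simp]
        exact Real.sqrt_le_sqrt (by nlinarith [norm_nonneg y, Real.sqrt_one])
      nlinarith [Real.sqrt_one]
    rw [hempty]
    simp
  · set r := Real.sqrt (1 - t^2/4) with hrdef
    have hr2 : r ^ 2 = 1 - t^2/4 := Real.sq_sqrt (by nlinarith)
    have hr0 : 0 < r := Real.sqrt_pos.2 (by nlinarith)
    have hr1 : r ≤ 1 := by nlinarith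
    -- the core inequality
    have hcore : ENNReal.ofReal (r^m) * volume (Kp + closedBall (0 : EuclideanSpace ℝ (Fin m)) 1)
        ≤ volume {y : EuclideanSpace ℝ (Fin m) | t < 2 * Real.sqrt (1 - (infDist y Kp)^2)} := by
      set W := volume {y : EuclideanSpace ℝ (Fin m) | t < 2 * Real.sqrt (1 - (infDist y Kp)^2)}
        with hW
      set V := volume (Kp + closedBall (0 : EuclideanSpace ℝ (Fin m)) 1) with hV
      have hVfin : V ≠ ∞ := (hKp.add (isCompact_closedBall 0 1)).measure_lt_top.ne
      rcases eq_or_ne W ∞ with hWtop | hWtop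
      · rw [hWtop]; exact le_top
      have hstep : ∀ r' : ℝ, 0 < r' → r' < r → r'^m * V.toReal ≤ W.toReal := by
        intro r' h0 h1
        have hsub := dist_level (Kp := Kp) t ht0 ht2 h0 h1
        have hkn := kneser_volume hKp hKpne h0 (le_trans h1.le hr1)
        have : ENNReal.ofReal (r'^m) * V ≤ W := le_trans hkn (measure_mono hsub)
        have h2 := ENNReal.toReal_mono hWtop this
        rwa [ENNReal.toReal_mul, ENNReal.toReal_ofReal (by positivity)] at h2
      -- pass to the limit r' → r
      have hlim : r^m * V.toReal ≤ W.toReal := by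
        have htend : Filter.Tendsto (fun r' : ℝ => r'^m * V.toReal) (nhdsWithin r (Set.Iio r))
            (nhds (r^m * V.toReal)) := by
          exact ((continuous_pow m).mul continuous_const).continuousAt.tendsto.mono_left
            nhdsWithin_le_nhds
        have hne : (nhdsWithin r (Set.Iio r)).NeBot := by infer_instance
        refine le_of_tendsto htend ?_
        filter_upwards [Ioo_mem_nhdsLT_of_mem (Set.mem_Ioc.2 ⟨hr0, le_rfl⟩)] with r' hr'
        exact hstep r' hr'.1 hr'.2
      have hfin : ENNReal.ofReal (r^m) * V ≠ ∞ :=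
        ENNReal.mul_ne_top ENNReal.ofReal_ne_top hVfin
      rw [← ENNReal.ofReal_toReal hfin, ← ENNReal.ofReal_toReal hWtop]
      apply ENNReal.ofReal_le_ofReal
      rwa [ENNReal.toReal_mul, ENNReal.toReal_ofReal (by positivity)]
    -- assemble with ball volume computation
    have hball : volume {y : EuclideanSpace ℝ (Fin m) | t < 2 * Real.sqrt (1 - ‖y‖^2)}
        = ENNReal.ofReal (r^m) * volume (ball (0 : EuclideanSpace ℝ (Fin m)) 1) := by
      rw [ball_level t ht0 ht2, ← hrdef, Measure.addHaar_ball_of_pos _ _ hr0,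
        finrank_euclideanSpace_fin]
    have hcb : volume (closedBall (0 : EuclideanSpace ℝ (Fin m)) 1)
        = volume (ball (0 : EuclideanSpace ℝ (Fin m)) 1) := by
      rw [Measure.addHaar_closedBall _ _ zero_le_one, one_pow, ENNReal.ofReal_one, one_mul]
    rw [hball, hcb]
    calc volume (Kp + closedBall (0 : EuclideanSpace ℝ (Fin m)) 1)
          * (ENNReal.ofReal (r^m) * volume (ball (0 : EuclideanSpace ℝ (Fin m)) 1))
        = volume (ball (0 : EuclideanSpace ℝ (Fin m)) 1)
          * (ENNReal.ofReal (r^m) * volume (Kp + closedBall (0 : EuclideanSpace ℝ (Fin m)) 1)) := by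
          ring
      _ ≤ volume (ball (0 : EuclideanSpace ℝ (Fin m)) 1)
          * volume {y : EuclideanSpace ℝ (Fin m) | t < 2 * Real.sqrt (1 - (infDist y Kp)^2)} :=
          mul_le_mul_right hcore _

/-- The main volume inequality in coordinates. -/
theorem main_coord {K : Set (EuclideanSpace ℝ (Fin (m+1)))} (hKc : IsCompact K)
    (hKne : K.Nonempty) :
    volume (pr '' K + closedBall (0 : EuclideanSpace ℝ (Fin m)) 1)
        * volume (closedBall (0 : EuclideanSpace ℝ (Fin (m+1))) 1)
      ≤ volume (closedBall (0 : EuclideanSpace ℝ (Fin m)) 1)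
        * volume (K + closedBall (0 : EuclideanSpace ℝ (Fin (m+1))) 1) := by
  set Kp := pr '' K with hKp
  have hKpc : IsCompact Kp := hKc.image pr_continuous
  have hKpne : Kp.Nonempty := hKne.image _
  -- the ball volume via layer cake
  have hg0cont : Continuous (fun y : EuclideanSpace ℝ (Fin m) => 2 * Real.sqrt (1 - ‖y‖^2)) := by
    continuity
  have hgEcont : Continuous
      (fun y : EuclideanSpace ℝ (Fin m) => 2 * Real.sqrt (1 - (infDist y Kp)^2)) := by
    have h1 : Continuous (fun y : EuclideanSpace ℝ (Fin m) => infDist y Kp) :=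
      continuous_infDist_pt Kp
    continuity
  have hB : volume (closedBall (0 : EuclideanSpace ℝ (Fin (m+1))) 1)
      = ∫⁻ t in Set.Ioi (0:ℝ),
          volume {y : EuclideanSpace ℝ (Fin m) | t < 2 * Real.sqrt (1 - ‖y‖^2)} := by
    rw [slice (isCompact_closedBall _ _).measurableSet]
    rw [show (fun y : EuclideanSpace ℝ (Fin m) =>
        volume {t : ℝ | sn y t ∈ closedBall (0 : EuclideanSpace ℝ (Fin (m+1))) 1})
      = fun y => ENNReal.ofReal (2 * Real.sqrt (1 - ‖y‖^2)) from funext fiber_ball]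
    exact lintegral_eq_lintegral_meas_lt volume
      (Filter.Eventually.of_forall fun y => by positivity) hg0cont.aemeasurable
  have hKB : ∫⁻ t in Set.Ioi (0:ℝ),
        volume {y : EuclideanSpace ℝ (Fin m) | t < 2 * Real.sqrt (1 - (infDist y Kp)^2)}
      ≤ volume (K + closedBall (0 : EuclideanSpace ℝ (Fin (m+1))) 1) := by
    rw [slice (hKc.add (isCompact_closedBall _ _)).measurableSet]
    rw [← lintegral_eq_lintegral_meas_lt volume
      (Filter.Eventually.of_forall fun y => by positivity) hgEcont.aemeasurable]
    exact lintegral_mono fun y => fiber_lower hKc hKne y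
  -- put it together
  have hfin1 : volume (Kp + closedBall (0 : EuclideanSpace ℝ (Fin m)) 1) ≠ ∞ :=
    (hKpc.add (isCompact_closedBall _ _)).measure_lt_top.ne
  have hfin2 : volume (closedBall (0 : EuclideanSpace ℝ (Fin m)) 1) ≠ ∞ :=
    (isCompact_closedBall _ _).measure_lt_top.ne
  calc volume (Kp + closedBall (0 : EuclideanSpace ℝ (Fin m)) 1)
        * volume (closedBall (0 : EuclideanSpace ℝ (Fin (m+1))) 1)
      = ∫⁻ t in Set.Ioi (0:ℝ), volume (Kp + closedBall (0 : EuclideanSpace ℝ (Fin m)) 1)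
          * volume {y : EuclideanSpace ℝ (Fin m) | t < 2 * Real.sqrt (1 - ‖y‖^2)} := by
        rw [lintegral_const_mul' _ _ hfin1, ← hB]
    _ ≤ ∫⁻ t in Set.Ioi (0:ℝ), volume (closedBall (0 : EuclideanSpace ℝ (Fin m)) 1)
          * volume {y : EuclideanSpace ℝ (Fin m) | t < 2 * Real.sqrt (1 - (infDist y Kp)^2)} := by
        refine lintegral_mono_ae ((ae_restrict_iff' measurableSet_Ioi).2 ?_)
        exact Filter.Eventually.of_forall fun t ht => level_master hKpc hKpne ht
    _ = volume (closedBall (0 : EuclideanSpace ℝ (Fin m)) 1)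
        * ∫⁻ t in Set.Ioi (0:ℝ),
            volume {y : EuclideanSpace ℝ (Fin m) | t < 2 * Real.sqrt (1 - (infDist y Kp)^2)} := by
        rw [lintegral_const_mul' _ _ hfin2]
    _ ≤ _ := mul_le_mul_right hKB _

lemma norm_sn_zero (y : EuclideanSpace ℝ (Fin m)) : ‖sn y 0‖ = ‖y‖ := by
  have h := normsq_sn y 0
  rw [← Real.sqrt_sq (norm_nonneg (sn y 0)), ← Real.sqrt_sq (norm_nonneg y)]
  rw [h]; norm_num


lemma pr_sn (y : EuclideanSpace ℝ (Fin m)) (t : ℝ) : pr (sn y t) = y := by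
  ext i; simp [sn, pr, Fin.snoc_castSucc]

lemma sn_zero_isometry : Isometry (fun y : EuclideanSpace ℝ (Fin m) => sn y 0) := by
  refine Isometry.of_dist_eq fun y z => ?_
  rw [dist_eq_norm, dist_eq_norm, sn_sub, show (0:ℝ) - 0 = 0 by ring, norm_sn_zero]

lemma inner_single_last (x : EuclideanSpace ℝ (Fin (m+1))) :
    (inner ℝ x (EuclideanSpace.single (Fin.last m) (1:ℝ)) : ℝ) = x (Fin.last m) := by
  rw [EuclideanSpace.inner_single_right]
  simp

lemma proj_eq_sn (x : EuclideanSpace ℝ (Fin (m+1))) :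
    x - (inner ℝ x (EuclideanSpace.single (Fin.last m) (1:ℝ)) : ℝ)
        • EuclideanSpace.single (Fin.last m) (1:ℝ)
      = sn (pr x) 0 := by
  rw [inner_single_last]
  ext i
  refine Fin.lastCases ?_ ?_ i
  · simp [sn, PiLp.sub_apply, PiLp.smul_apply, EuclideanSpace.single_apply, Fin.snoc_last]
  · intro j
    simp [sn, pr, PiLp.sub_apply, PiLp.smul_apply, EuclideanSpace.single_apply,
      Fin.snoc_castSucc, (Fin.castSucc_lt_last j).ne]

lemma proj_image (S : Set (EuclideanSpace ℝ (Fin (m+1)))) :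
    (fun x : EuclideanSpace ℝ (Fin (m+1)) =>
        x - (inner ℝ x (EuclideanSpace.single (Fin.last m) (1:ℝ)) : ℝ)
          • EuclideanSpace.single (Fin.last m) (1:ℝ)) '' S
      = (fun y => sn y 0) '' (pr '' S) := by
  rw [Set.image_image]
  exact Set.image_congr fun x _ => proj_eq_sn x

lemma pr_add (a b : EuclideanSpace ℝ (Fin (m+1))) : pr (a + b) = pr a + pr b := by
  ext i; simp [pr, PiLp.add_apply]

lemma pr_image_add (S T : Set (EuclideanSpace ℝ (Fin (m+1)))) :
    pr '' (S + T) = pr '' S + pr '' T :=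
  Set.image_image2_distrib fun a b => pr_add a b

lemma pr_image_ball :
    pr '' closedBall (0 : EuclideanSpace ℝ (Fin (m+1))) 1
      = closedBall (0 : EuclideanSpace ℝ (Fin m)) 1 := by
  ext y
  constructor
  · rintro ⟨x, hx, rfl⟩
    rw [mem_closedBall_zero_iff] at hx ⊢
    exact le_trans (norm_pr_le x) hx
  · intro hy
    rw [mem_closedBall_zero_iff] at hy
    exact ⟨sn y 0, by rw [mem_closedBall_zero_iff, norm_sn_zero]; exact hy, pr_sn y 0⟩

lemma ball_inter_hyperplane :
    closedBall (0 : EuclideanSpace ℝ (Fin (m+1))) 1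
        ∩ {x : EuclideanSpace ℝ (Fin (m+1)) |
            (inner ℝ x (EuclideanSpace.single (Fin.last m) (1:ℝ)) : ℝ) = 0}
      = (fun y : EuclideanSpace ℝ (Fin m) => sn y 0) '' closedBall 0 1 := by
  ext x
  simp only [Set.mem_inter_iff, Set.mem_setOf_eq, Set.mem_image, inner_single_last]
  constructor
  · rintro ⟨hx, hlast⟩
    refine ⟨pr x, ?_, ?_⟩
    · rw [mem_closedBall_zero_iff] at hx ⊢
      exact le_trans (norm_pr_le x) hx
    · have := sn_pr x
      rw [← hlast]
      exact this
  · rintro ⟨y, hy, rfl⟩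
    rw [mem_closedBall_zero_iff] at hy ⊢
    refine ⟨by rw [norm_sn_zero]; exact hy, ?_⟩
    simp [sn, Fin.snoc_last]

/-- coordinate version of the final statement -/
theorem final_coord {K : Set (EuclideanSpace ℝ (Fin (m+1)))} (hKc : IsCompact K)
    (hKne : K.Nonempty) :
    (volume (K + closedBall (0 : EuclideanSpace ℝ (Fin (m+1))) 1)).toReal *
        (μH[(m:ℝ)]
          (closedBall (0 : EuclideanSpace ℝ (Fin (m+1))) 1 ∩
            {x : EuclideanSpace ℝ (Fin (m+1)) |
              (inner ℝ x (EuclideanSpace.single (Fin.last m) (1:ℝ)) : ℝ) = 0})).toReal ≥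
      (volume (closedBall (0 : EuclideanSpace ℝ (Fin (m+1))) 1)).toReal *
        (μH[(m:ℝ)]
          ((fun x : EuclideanSpace ℝ (Fin (m+1)) =>
              x - (inner ℝ x (EuclideanSpace.single (Fin.last m) (1:ℝ)) : ℝ)
                • EuclideanSpace.single (Fin.last m) (1:ℝ)) ''
            (K + closedBall (0 : EuclideanSpace ℝ (Fin (m+1))) 1))).toReal := by
  obtain ⟨c, hc0, hceq⟩ := muH_eq_smul_volume (m := m)
  -- identify the hyperplane pieces
  have hμ1 : μH[(m:ℝ)]
      (closedBall (0 : EuclideanSpace ℝ (Fin (m+1))) 1 ∩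
        {x : EuclideanSpace ℝ (Fin (m+1)) |
          (inner ℝ x (EuclideanSpace.single (Fin.last m) (1:ℝ)) : ℝ) = 0})
      = (c : ℝ≥0∞) * volume (closedBall (0 : EuclideanSpace ℝ (Fin m)) 1) := by
    rw [ball_inter_hyperplane,
      sn_zero_isometry.hausdorffMeasure_image (Or.inl (by positivity)), hceq]
    rfl
  have hμ2 : μH[(m:ℝ)]
      ((fun x : EuclideanSpace ℝ (Fin (m+1)) =>
          x - (inner ℝ x (EuclideanSpace.single (Fin.last m) (1:ℝ)) : ℝ)
            • EuclideanSpace.single (Fin.last m) (1:ℝ)) ''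
        (K + closedBall (0 : EuclideanSpace ℝ (Fin (m+1))) 1))
      = (c : ℝ≥0∞)
        * volume (pr '' K + closedBall (0 : EuclideanSpace ℝ (Fin m)) 1) := by
    rw [proj_image, sn_zero_isometry.hausdorffMeasure_image (Or.inl (by positivity)),
      pr_image_add, pr_image_ball, hceq]
    rfl
  rw [hμ1, hμ2]
  -- finiteness
  have hfa : volume (K + closedBall (0 : EuclideanSpace ℝ (Fin (m+1))) 1) ≠ ∞ :=
    (hKc.add (isCompact_closedBall _ _)).measure_lt_top.ne
  have hfb : volume (closedBall (0 : EuclideanSpace ℝ (Fin m)) 1) ≠ ∞ :=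
    (isCompact_closedBall _ _).measure_lt_top.ne
  have hfb' : volume (pr '' K + closedBall (0 : EuclideanSpace ℝ (Fin m)) 1) ≠ ∞ :=
    ((hKc.image pr_continuous).add (isCompact_closedBall _ _)).measure_lt_top.ne
  have hfa' : volume (closedBall (0 : EuclideanSpace ℝ (Fin (m+1))) 1) ≠ ∞ :=
    (isCompact_closedBall _ _).measure_lt_top.ne
  have hmain := main_coord hKc hKne
  have hmainR : (volume (pr '' K + closedBall (0 : EuclideanSpace ℝ (Fin m)) 1)).toReal
        * (volume (closedBall (0 : EuclideanSpace ℝ (Fin (m+1))) 1)).toReal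
      ≤ (volume (closedBall (0 : EuclideanSpace ℝ (Fin m)) 1)).toReal
        * (volume (K + closedBall (0 : EuclideanSpace ℝ (Fin (m+1))) 1)).toReal := by
    have := ENNReal.toReal_mono (ENNReal.mul_ne_top hfb hfa) hmain
    rwa [ENNReal.toReal_mul, ENNReal.toReal_mul] at this
  rw [ENNReal.toReal_mul, ENNReal.toReal_mul, ENNReal.coe_toReal]
  have hc0' : (0:ℝ) ≤ (c:ℝ) := c.coe_nonneg
  nlinarith [ENNReal.toReal_nonneg
      (a := volume (K + closedBall (0 : EuclideanSpace ℝ (Fin (m+1))) 1)),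
    ENNReal.toReal_nonneg (a := volume (closedBall (0 : EuclideanSpace ℝ (Fin m)) 1)),
    mul_le_mul_of_nonneg_left hmainR hc0']

end PP

/-- For a nonempty compact `K ⊂ ℝ^n` and a unit vector `u`,
`|K + B| ⋅ H^{n-1}(B ∩ u^⊥) ≥ |B| ⋅ H^{n-1}(P_{u^⊥}(K + B))`, where `B` is the closed
unit ball, `u^⊥` the hyperplane orthogonal to `u` and `P_{u^⊥}` the orthogonal
projection onto `u^⊥`. -/
theorem volume_add_ball_div_projection_ge
    (n : ℕ) (hn : 2 ≤ n) (K : Set (EuclideanSpace ℝ (Fin n)))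
    (hKne : K.Nonempty) (hKcp : IsCompact K)
    (u : EuclideanSpace ℝ (Fin n)) (hu : ‖u‖ = 1) :
    (volume (K + Metric.closedBall (0 : EuclideanSpace ℝ (Fin n)) 1)).toReal *
        (μH[((n : ℝ) - 1)]
          (Metric.closedBall (0 : EuclideanSpace ℝ (Fin n)) 1 ∩
            {x : EuclideanSpace ℝ (Fin n) | (inner ℝ x u : ℝ) = 0})).toReal ≥
      (volume (Metric.closedBall (0 : EuclideanSpace ℝ (Fin n)) 1)).toReal *
        (μH[((n : ℝ) - 1)]
          ((fun x : EuclideanSpace ℝ (Fin n) => x - (inner ℝ x u : ℝ) • u) ''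
            (K + Metric.closedBall (0 : EuclideanSpace ℝ (Fin n)) 1))).toReal := by
  obtain ⟨m, rfl⟩ : ∃ m, n = m + 1 := ⟨n - 1, by omega⟩
  have hexp : ((m + 1 : ℕ) : ℝ) - 1 = (m : ℝ) := by push_cast; ring
  rw [hexp]
  -- build a rotation sending `u` to the last coordinate vector
  have hcard : Module.finrank ℝ (EuclideanSpace ℝ (Fin (m+1)))
      = Fintype.card (Fin (m+1)) := by
    simp [finrank_euclideanSpace_fin]
  have hON : Orthonormal ℝ
      (Set.restrict ({Fin.last m} : Set (Fin (m+1))) (fun _ => u)) := by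
    constructor
    · intro i; exact hu
    · intro i j hij
      exact absurd (Subtype.ext (i.2.trans j.2.symm)) hij
  obtain ⟨b, hb⟩ := hON.exists_orthonormalBasis_extension_of_card_eq hcard
  have hbu : b (Fin.last m) = u := hb (Fin.last m) rfl
  set T := b.repr with hT
  set e : EuclideanSpace ℝ (Fin (m+1)) := EuclideanSpace.single (Fin.last m) (1:ℝ) with he
  have hTu : T u = e := by rw [← hbu, hT]; exact b.repr_self _
  have hinner : ∀ x : EuclideanSpace ℝ (Fin (m+1)), (inner ℝ x u : ℝ) = inner ℝ (T x) e := by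
    intro x
    rw [← hTu]
    exact (T.inner_map_map x u).symm
  -- transported sets
  have hvol : ∀ S : Set (EuclideanSpace ℝ (Fin (m+1))), MeasurableSet S →
      volume (T '' S) = volume S := by
    intro S hS
    rw [show T '' S = ⇑(T.symm) ⁻¹' S from T.toEquiv.image_eq_preimage_symm S]
    exact (T.symm.measurePreserving).measure_preimage hS.nullMeasurableSet
  have hμH : ∀ S : Set (EuclideanSpace ℝ (Fin (m+1))),
      μH[(m:ℝ)] (T '' S) = μH[(m:ℝ)] S := fun S =>
    T.isometry.hausdorffMeasure_image (Or.inl (by positivity)) S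
  have hBall : T '' closedBall (0 : EuclideanSpace ℝ (Fin (m+1))) 1
      = closedBall (0 : EuclideanSpace ℝ (Fin (m+1))) 1 := by
    ext z
    constructor
    · rintro ⟨w, hw, rfl⟩
      rw [mem_closedBall_zero_iff] at hw ⊢
      rwa [T.norm_map]
    · intro hz
      refine ⟨T.symm z, ?_, by simp⟩
      rw [mem_closedBall_zero_iff] at hz ⊢
      rwa [T.symm.norm_map]
  have hAdd : ∀ S1 S2 : Set (EuclideanSpace ℝ (Fin (m+1))),
      T '' (S1 + S2) = T '' S1 + T '' S2 := fun S1 S2 =>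
    Set.image_image2_distrib fun a b => map_add T a b
  set K' := T '' K with hK'
  have hK'c : IsCompact K' := hKcp.image T.continuous
  have hK'ne : K'.Nonempty := hKne.image _
  -- transport each of the four factors
  have h1 : volume (K + closedBall (0 : EuclideanSpace ℝ (Fin (m+1))) 1)
      = volume (K' + closedBall (0 : EuclideanSpace ℝ (Fin (m+1))) 1) := by
    rw [← hvol _ (hKcp.add (isCompact_closedBall _ _)).measurableSet, hAdd, hBall]
  have h2 : volume (closedBall (0 : EuclideanSpace ℝ (Fin (m+1))) 1)
      = volume (closedBall (0 : EuclideanSpace ℝ (Fin (m+1))) 1) := rfl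
  have h3 : μH[(m:ℝ)] (closedBall (0 : EuclideanSpace ℝ (Fin (m+1))) 1 ∩
        {x : EuclideanSpace ℝ (Fin (m+1)) | (inner ℝ x u : ℝ) = 0})
      = μH[(m:ℝ)] (closedBall (0 : EuclideanSpace ℝ (Fin (m+1))) 1 ∩
        {x : EuclideanSpace ℝ (Fin (m+1)) | (inner ℝ x e : ℝ) = 0}) := by
    rw [← hμH (closedBall _ 1 ∩ {x | (inner ℝ x u : ℝ) = 0}),
      Set.image_inter T.injective, hBall]
    congr 2
    ext z
    simp only [Set.mem_image, Set.mem_setOf_eq]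
    constructor
    · rintro ⟨w, hw, rfl⟩
      rwa [← hinner w]
    · intro hz
      exact ⟨T.symm z, by rw [hinner (T.symm z)]; simpa using hz, by simp⟩
  have h4 : μH[(m:ℝ)] ((fun x : EuclideanSpace ℝ (Fin (m+1)) =>
        x - (inner ℝ x u : ℝ) • u) '' (K + closedBall 0 1))
      = μH[(m:ℝ)] ((fun x : EuclideanSpace ℝ (Fin (m+1)) =>
        x - (inner ℝ x e : ℝ) • e) '' (K' + closedBall 0 1)) := by
    have hKcb : K' + closedBall 0 1 = T '' (K + closedBall 0 1) := by
      rw [hAdd, hBall]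
    rw [← hμH ((fun x => x - (inner ℝ x u : ℝ) • u) '' (K + closedBall 0 1)),
      Set.image_image, hKcb, Set.image_image]
    exact congrArg _ (Set.image_congr fun x _ => by
      rw [map_sub, T.map_smul, hTu, hinner x])
  rw [h1, h3, h4]
  exact PP.final_coord hK'c hK'ne
end
end

section
/- Fix an integer n ≥ 1. For every β > 0 there exist nonempty compact sets A, B ⊂ ℝ^n such that |A| · |A + B + B| > β · |A + B|². -/
open scoped Pointwise
open MeasureTheory

noncomputable def tf (a : ℕ → Bool) : ℝ := ∑' i, (if a i then ((1:ℝ)/3)^(i+1) else 0)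

lemma summable_geom_third : Summable fun i : ℕ => ((1:ℝ)/3)^(i+1) := by
  have := (summable_geometric_of_lt_one (show (0:ℝ) ≤ 1/3 by norm_num)
    (show (1:ℝ)/3 < 1 by norm_num)).mul_left (1/3)
  exact this.congr fun i => by ring

lemma summable_tf (a : ℕ → Bool) :
    Summable fun i => (if a i then ((1:ℝ)/3)^(i+1) else 0) := by
  apply Summable.of_nonneg_of_le (fun i => by split <;> positivity)
    (fun i => ?_) summable_geom_third
  split <;> [exact le_rfl; positivity]

lemma tf_nonneg (a : ℕ → Bool) : 0 ≤ tf a :=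
  tsum_nonneg fun i => by split <;> positivity

lemma sum_geom_third : ∑' i : ℕ, ((1:ℝ)/3)^(i+1) = 1/2 := by
  have h : ∑' i : ℕ, ((1:ℝ)/3)^i = (1 - 1/3)⁻¹ :=
    tsum_geometric_of_lt_one (by norm_num) (by norm_num)
  have h2 : ∑' i : ℕ, ((1:ℝ)/3)^(i+1) = (1/3) * ∑' i : ℕ, ((1:ℝ)/3)^i := by
    rw [← tsum_mul_left]
    exact tsum_congr fun i => by ring
  rw [h2, h]; norm_num

lemma tf_le_half (a : ℕ → Bool) : tf a ≤ 1/2 := by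
  rw [← sum_geom_third]
  exact Summable.tsum_le_tsum (fun i => by split <;> [exact le_rfl; positivity]) (summable_tf a)
    summable_geom_third

def Dset : Set ℝ := Set.range tf

lemma Dset_nonempty : Dset.Nonempty := ⟨tf (fun _ => false), Set.mem_range_self _⟩

lemma Dset_subset : Dset ⊆ Set.Icc 0 (1/2) := by
  rintro x ⟨a, rfl⟩; exact ⟨tf_nonneg a, tf_le_half a⟩

lemma continuous_tf : Continuous tf := by
  apply continuous_tsum (u := fun i => ((1:ℝ)/3)^(i+1))
  · intro i
    exact (continuous_of_discreteTopology
      (f := fun b : Bool => if b then ((1:ℝ)/3)^(i+1) else 0)).comp (continuous_apply i)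
  · exact summable_geom_third
  · intro i a
    rw [Real.norm_eq_abs, abs_of_nonneg (by split <;> positivity)]
    split <;> [exact le_rfl; positivity]

lemma isCompact_Dset : IsCompact Dset :=
  isCompact_range continuous_tf

lemma tf_decomp (a : ℕ → Bool) :
    tf a = (1/3) * tf (fun i => a (i+1)) + (if a 0 then ((1:ℝ)/3) else 0) := by
  unfold tf
  rw [Summable.tsum_eq_zero_add (summable_tf a)]
  have h : ∑' i : ℕ, (if a (i+1) then ((1:ℝ)/3)^(i+1+1) else 0)
      = (1/3) * ∑' i : ℕ, (if a (i+1) then ((1:ℝ)/3)^(i+1) else 0) := by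
    rw [← tsum_mul_left]
    exact tsum_congr fun i => by split <;> ring
  rw [h]
  have hp : ((1:ℝ)/3)^(0+1) = 1/3 := by norm_num
  rw [hp, add_comm]

lemma Dset_selfsimilar :
    Dset ⊆ ((1/3 : ℝ) • Dset) ∪ ((1/3 : ℝ) +ᵥ ((1/3 : ℝ) • Dset)) := by
  rintro x ⟨a, rfl⟩
  rw [tf_decomp a]
  cases h : a 0 with
  | false =>
    left
    rw [if_neg (by simp [h]), add_zero]
    exact ⟨tf (fun i => a (i+1)), Set.mem_range_self _, by simp [smul_eq_mul]⟩
  | true =>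
    right
    rw [if_pos rfl, Set.mem_vadd_set]
    refine ⟨(1/3) * tf (fun i => a (i+1)), ⟨tf (fun i => a (i+1)), Set.mem_range_self _, by simp [smul_eq_mul]⟩, ?_⟩
    rw [vadd_eq_add]
    ring

lemma volume_Dset : volume Dset = 0 := by
  have hfin : volume Dset < ⊤ :=
    lt_of_le_of_lt (measure_mono Dset_subset) (by simp [Real.volume_Icc])
  have hscale : volume ((1/3 : ℝ) • Dset) = ENNReal.ofReal (1/3) * volume Dset := by
    rw [MeasureTheory.Measure.addHaar_smul]
    norm_num [abs_of_nonneg]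
  have h := measure_mono (μ := volume) Dset_selfsimilar
  have h2 : volume (((1/3 : ℝ) • Dset) ∪ ((1/3 : ℝ) +ᵥ ((1/3 : ℝ) • Dset)))
      ≤ ENNReal.ofReal (1/3) * volume Dset + ENNReal.ofReal (1/3) * volume Dset := by
    refine le_trans (measure_union_le _ _) ?_
    rw [measure_vadd, hscale]
  have hle : volume Dset ≤ ENNReal.ofReal (2/3) * volume Dset := by
    refine le_trans h (le_trans h2 ?_)
    rw [← add_mul, ← ENNReal.ofReal_add (by norm_num) (by norm_num)]
    norm_num
  have hr : (volume Dset).toReal ≤ (2/3) * (volume Dset).toReal := by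
    have := ENNReal.toReal_mono (by
        exact ENNReal.mul_ne_top ENNReal.ofReal_ne_top hfin.ne) hle
    rwa [ENNReal.toReal_mul, ENNReal.toReal_ofReal (by norm_num)] at this
  have h0 : (volume Dset).toReal = 0 := by nlinarith [ENNReal.toReal_nonneg (a := volume Dset)]
  exact (ENNReal.toReal_eq_zero_iff _).mp h0 |>.resolve_right hfin.ne

noncomputable def dig (y : ℝ) : ℕ := min 2 (Int.toNat ⌊3*y⌋)

lemma dig_le_two (y : ℝ) : dig y ≤ 2 := min_le_left _ _

lemma dig_step {y : ℝ} (hy : y ∈ Set.Icc (0:ℝ) 1) :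
    0 ≤ 3*y - dig y ∧ 3*y - dig y ≤ 1 := by
  obtain ⟨h0, h1⟩ := hy
  have ht0 : (0:ℝ) ≤ 3*y := by linarith
  have ht1 : 3*y ≤ 3 := by linarith
  have hm0 : (0:ℤ) ≤ ⌊3*y⌋ := Int.floor_nonneg.mpr ht0
  have hm3 : ⌊3*y⌋ ≤ 3 := by
    have := Int.floor_le_floor (R := ℝ) ht1
    simpa using this
  have htn : ((Int.toNat ⌊3*y⌋ : ℤ) : ℝ) = ((⌊3*y⌋ : ℤ) : ℝ) := by
    rw [Int.toNat_of_nonneg hm0]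
  rcases le_or_gt (Int.toNat ⌊3*y⌋) 2 with hc | hc
  · have hd : dig y = Int.toNat ⌊3*y⌋ := min_eq_right hc
    have hfl : ((⌊3*y⌋ : ℤ) : ℝ) ≤ 3*y := Int.floor_le _
    have hfu : 3*y < ((⌊3*y⌋ : ℤ) : ℝ) + 1 := Int.lt_floor_add_one _
    have hnn : ((⌊3*y⌋.toNat : ℕ) : ℝ) = ((⌊3*y⌋ : ℤ) : ℝ) := by
      exact_mod_cast congrArg (Int.cast : ℤ → ℝ) (Int.toNat_of_nonneg hm0)
    rw [hd, hnn]
    constructor <;> linarith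
  · have hm : ⌊3*y⌋ = 3 := by omega
    have hy3 : 3*y = 3 := by
      have hfl : ((3:ℤ) : ℝ) ≤ 3*y := by rw [← hm]; exact Int.floor_le _
      push_cast at hfl
      linarith
    have hd : dig y = 2 := by
      have : Int.toNat ⌊3*y⌋ = 3 := by omega
      simp [dig, this]
    rw [hd, hy3]
    norm_num

noncomputable def st (x : ℝ) : ℕ → ℝ
  | 0 => x
  | (k+1) => 3 * st x k - dig (st x k)

lemma st_mem {x : ℝ} (hx : x ∈ Set.Icc (0:ℝ) 1) : ∀ k, st x k ∈ Set.Icc (0:ℝ) 1 := by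
  intro k
  induction k with
  | zero => exact hx
  | succ k ih =>
    have := dig_step ih
    exact ⟨this.1, this.2⟩

lemma st_partial {x : ℝ} (hx : x ∈ Set.Icc (0:ℝ) 1) (m : ℕ) :
    x = (∑ j ∈ Finset.range m, (dig (st x j) : ℝ) * ((1:ℝ)/3)^(j+1)) + st x m * ((1:ℝ)/3)^m := by
  induction m with
  | zero => simp [st]
  | succ m ih =>
    have e : st x (m+1) * ((1:ℝ)/3)^(m+1)
        = st x m * ((1:ℝ)/3)^m - (dig (st x m) : ℝ) * ((1:ℝ)/3)^(m+1) := by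
      show (3 * st x m - (dig (st x m) : ℝ)) * _ = _
      ring
    rw [Finset.sum_range_succ, e]
    linarith [ih]

lemma summable_dig (x : ℝ) :
    Summable (fun j => (dig (st x j) : ℝ) * ((1:ℝ)/3)^(j+1)) := by
  apply Summable.of_nonneg_of_le (fun j => by positivity) (fun j => ?_)
    (summable_geom_third.mul_left 2)
  have : (dig (st x j) : ℝ) ≤ 2 := by exact_mod_cast dig_le_two _
  calc (dig (st x j) : ℝ) * ((1:ℝ)/3)^(j+1) ≤ 2 * ((1:ℝ)/3)^(j+1) := by
        apply mul_le_mul_of_nonneg_right this (by positivity)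
    _ = 2 * ((1:ℝ)/3)^(j+1) := rfl

lemma hasSum_dig {x : ℝ} (hx : x ∈ Set.Icc (0:ℝ) 1) :
    HasSum (fun j => (dig (st x j) : ℝ) * ((1:ℝ)/3)^(j+1)) x := by
  have hsum := summable_dig x
  have h1 : Filter.Tendsto (fun m => ∑ j ∈ Finset.range m, (dig (st x j) : ℝ) * ((1:ℝ)/3)^(j+1))
      Filter.atTop (nhds (∑' j, (dig (st x j) : ℝ) * ((1:ℝ)/3)^(j+1))) :=
    hsum.hasSum.tendsto_sum_nat
  have hgeo : Filter.Tendsto (fun m : ℕ => ((1:ℝ)/3)^m) Filter.atTop (nhds 0) :=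
    tendsto_pow_atTop_nhds_zero_of_lt_one (by norm_num) (by norm_num)
  have hst : Filter.Tendsto (fun m => st x m * ((1:ℝ)/3)^m) Filter.atTop (nhds 0) := by
    apply squeeze_zero (g := fun m : ℕ => ((1:ℝ)/3)^m)
      (fun m => mul_nonneg (st_mem hx m).1 (by positivity)) (fun m => ?_) hgeo
    exact mul_le_of_le_one_left (by positivity) (st_mem hx m).2
  have h2 : Filter.Tendsto (fun m => ∑ j ∈ Finset.range m, (dig (st x j) : ℝ) * ((1:ℝ)/3)^(j+1))
      Filter.atTop (nhds x) := by
    have hc := Filter.Tendsto.sub (tendsto_const_nhds (x := x) (f := Filter.atTop (α := ℕ))) hst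
    simp only [sub_zero] at hc
    apply hc.congr
    intro m
    have := st_partial hx m
    linarith
  have h3 : ∑' j, (dig (st x j) : ℝ) * ((1:ℝ)/3)^(j+1) = x := tendsto_nhds_unique h1 h2
  have h4 := hsum.hasSum
  rw [h3] at h4
  exact h4

lemma mem_DD {x : ℝ} (hx : x ∈ Set.Icc (0:ℝ) 1) : x ∈ Dset + Dset := by
  set b : ℕ → Bool := fun j => decide (1 ≤ dig (st x j)) with hb
  set b' : ℕ → Bool := fun j => decide (2 ≤ dig (st x j)) with hb'
  have hsplit : ∀ j, (dig (st x j) : ℝ) * ((1:ℝ)/3)^(j+1)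
      = (if b j then ((1:ℝ)/3)^(j+1) else 0) + (if b' j then ((1:ℝ)/3)^(j+1) else 0) := by
    intro j
    have h2 : dig (st x j) ≤ 2 := dig_le_two _
    interval_cases h : dig (st x j) <;> simp [hb, hb', h] <;> ring
  have hadd : HasSum (fun j => (if b j then ((1:ℝ)/3)^(j+1) else 0) + (if b' j then ((1:ℝ)/3)^(j+1) else 0)) (tf b + tf b') :=
    (summable_tf b).hasSum.add (summable_tf b').hasSum
  have h5 : HasSum (fun j => (dig (st x j) : ℝ) * ((1:ℝ)/3)^(j+1)) (tf b + tf b') :=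
    hadd.congr_fun (fun j => hsplit j)
  have hx2 : x = tf b + tf b' := (hasSum_dig hx).unique h5
  exact ⟨tf b, Set.mem_range_self _, tf b', Set.mem_range_self _, hx2.symm⟩

lemma countable_add_null {F D : Set ℝ} (hF : F.Countable) (hD : volume D = 0) :
    volume (F + D) = 0 := by
  have : F + D = ⋃ x ∈ F, x +ᵥ D := by
    ext z
    simp only [Set.mem_add, Set.mem_iUnion, Set.mem_vadd_set]
    constructor
    · rintro ⟨a, ha, b, hb, rfl⟩; exact ⟨a, ha, b, hb, rfl⟩
    · rintro ⟨a, ha, b, hb, rfl⟩; exact ⟨a, ha, b, hb, rfl⟩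
  rw [this]
  refine (measure_biUnion_null_iff hF).mpr (fun x _ => ?_)
  rw [measure_vadd]
  exact hD

def Fst (N : ℕ) : Set ℝ := Nat.cast '' (Set.Icc 1 N)

def Aone (N : ℕ) : Set ℝ := Set.Icc (0:ℝ) 1 ∪ Fst N

lemma Fst_finite (N : ℕ) : (Fst N).Finite := (Set.finite_Icc _ _).image _

lemma Aone_compact (N : ℕ) : IsCompact (Aone N) :=
  isCompact_Icc.union (Fst_finite N).isCompact

lemma Aone_nonempty (N : ℕ) : (Aone N).Nonempty :=
  ⟨0, Or.inl ⟨le_refl _, by norm_num⟩⟩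

lemma volume_Aone (N : ℕ) : volume (Aone N) = 1 := by
  apply le_antisymm
  · calc volume (Aone N) ≤ volume (Set.Icc (0:ℝ) 1) + volume (Fst N) := measure_union_le _ _
      _ = 1 := by
        rw [(Fst_finite N).countable.measure_zero, Real.volume_Icc]
        norm_num
  · have := measure_mono (μ := volume) (Set.subset_union_left (s := Set.Icc (0:ℝ) 1) (t := Fst N))
    rwa [Real.volume_Icc, show ENNReal.ofReal (1 - 0) = 1 by norm_num] at this

lemma volume_Aone_add_D (N : ℕ) : volume (Aone N + Dset) ≤ ENNReal.ofReal (3/2) := by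
  have hsub : Aone N + Dset ⊆ Set.Icc (0:ℝ) (3/2) ∪ (Fst N + Dset) := by
    rw [Aone, Set.union_add]
    apply Set.union_subset
    · rintro z ⟨a, ha, b, hb, rfl⟩
      have hb' := Dset_subset hb
      exact Or.inl ⟨by simp at ha hb' ⊢; linarith [ha.1, hb'.1], by
        simp at ha hb' ⊢; linarith [ha.2, hb'.2]⟩
    · exact Set.subset_union_right
  calc volume (Aone N + Dset) ≤ volume (Set.Icc (0:ℝ) (3/2) ∪ (Fst N + Dset)) := measure_mono hsub
    _ ≤ volume (Set.Icc (0:ℝ) (3/2)) + volume (Fst N + Dset) := measure_union_le _ _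
    _ = ENNReal.ofReal (3/2) := by
      rw [countable_add_null (Fst_finite N).countable volume_Dset, Real.volume_Icc]
      norm_num

lemma Icc_subset_Fst_add {N : ℕ} (hN : 1 ≤ N) :
    Set.Icc (1:ℝ) (N+1) ⊆ Fst N + Set.Icc (0:ℝ) 1 := by
  rintro x ⟨hx1, hx2⟩
  have hfl : (1:ℤ) ≤ ⌊x⌋ := by
    rw [Int.le_floor]; exact_mod_cast hx1
  set k : ℕ := min N ⌊x⌋.toNat with hk
  have hk1 : 1 ≤ k := le_min hN (by omega)
  have hkN : k ≤ N := min_le_left _ _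
  have hkx : (k : ℝ) ≤ x := by
    have h1 : (k : ℤ) ≤ ⌊x⌋ := by omega
    have := Int.floor_le x
    have h2 : ((k:ℤ):ℝ) ≤ ((⌊x⌋:ℤ):ℝ) := by exact_mod_cast h1
    push_cast at h2 ⊢
    linarith
  have hxk : x ≤ (k:ℝ) + 1 := by
    rcases le_or_gt (⌊x⌋.toNat) N with hc | hc
    · have hkf : (k:ℤ) = ⌊x⌋ := by omega
      have := Int.lt_floor_add_one x
      have h2 : ((k:ℤ):ℝ) = ((⌊x⌋:ℤ):ℝ) := by exact_mod_cast hkf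
      push_cast at h2 ⊢
      linarith
    · have hkf : k = N := by omega
      rw [hkf]
      push_cast
      linarith
  exact ⟨(k:ℝ), ⟨k, ⟨hk1, hkN⟩, rfl⟩, x - k, ⟨by linarith, by linarith⟩, by ring⟩

lemma pi_add {n : ℕ} (s t : Fin n → Set ℝ) :
    Set.univ.pi s + Set.univ.pi t = Set.univ.pi (fun i => s i + t i) := by
  ext x
  constructor
  · rintro ⟨a, ha, b, hb, rfl⟩ i _
    exact ⟨a i, ha i (Set.mem_univ i), b i, hb i (Set.mem_univ i), rfl⟩
  · intro hx
    have h : ∀ i, ∃ a ∈ s i, ∃ b ∈ t i, a + b = x i := fun i => hx i (Set.mem_univ i)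
    choose a ha b hb hab using h
    exact ⟨a, fun i _ => ha i, b, fun i _ => hb i, funext fun i => (hab i)⟩

/-- The Plünnecke-Ruzsa inequality fails for general compact sets: for every `β > 0` there
are nonempty compact `A, B ⊂ ℝ^n` with `|A| |A + B + B| > β |A + B|²`. -/
theorem plunnecke_ruzsa_fails_compact
    (n : ℕ) (hn : 1 ≤ n) (β : ℝ) (hβ : 0 < β) :
    ∃ A B : Set (EuclideanSpace ℝ (Fin n)),
      A.Nonempty ∧ IsCompact A ∧ B.Nonempty ∧ IsCompact B ∧
        (volume A).toReal * (volume (A + B + B)).toReal >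
          β * (volume (A + B)).toReal ^ 2 := by
  have : NeZero n := ⟨by omega⟩
  obtain ⟨N, hNgt⟩ := exists_nat_gt (max 1 ((9/4) * β))
  have hN1 : 1 ≤ N := by
    have h1 : (1:ℝ) < N := lt_of_le_of_lt (le_max_left _ _) hNgt
    exact_mod_cast h1.le
  have hNβ : (9/4) * β < N := lt_of_le_of_lt (le_max_right _ _) hNgt
  -- 1-D facts
  have hAc : IsCompact (Aone N) := Aone_compact N
  have hBc : IsCompact Dset := isCompact_Dset
  have hABc : IsCompact (Aone N + Dset) := hAc.add hBc
  have hABBc : IsCompact (Aone N + Dset + Dset) := hABc.add hBc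
  have v1 : volume (Aone N) = 1 := volume_Aone N
  have v2 : volume (Aone N + Dset) ≤ ENNReal.ofReal (3/2) := volume_Aone_add_D N
  have v3 : ENNReal.ofReal N ≤ volume (Aone N + Dset + Dset) := by
    have hsub : Set.Icc (1:ℝ) (N+1) ⊆ Aone N + Dset + Dset := by
      refine (Icc_subset_Fst_add hN1).trans ?_
      rw [add_assoc]
      exact Set.add_subset_add (Set.subset_union_right) (fun x hx => mem_DD hx)
    have := measure_mono (μ := volume) hsub
    rwa [Real.volume_Icc, show ((N:ℝ)+1-1) = (N:ℝ) by ring] at this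
  -- pi sets
  set SA : Fin n → Set ℝ := fun i => if i = 0 then Aone N else Set.Icc 0 1 with hSA
  set SB : Fin n → Set ℝ := fun i => if i = 0 then Dset else {0} with hSB
  set PA := Set.univ.pi SA with hPA
  set PB := Set.univ.pi SB with hPB
  have hSAc : ∀ i, IsCompact (SA i) := fun i => by
    rw [hSA]; dsimp only; split
    · exact hAc
    · exact isCompact_Icc
  have hSBc : ∀ i, IsCompact (SB i) := fun i => by
    rw [hSB]; dsimp only; split
    · exact hBc
    · exact isCompact_singleton
  have hPAc : IsCompact PA := isCompact_univ_pi hSAc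
  have hPBc : IsCompact PB := isCompact_univ_pi hSBc
  have hPAne : PA.Nonempty := by
    rw [hPA]
    exact Set.univ_pi_nonempty_iff.mpr (fun i => by
      rw [hSA]; dsimp only; split
      · exact Aone_nonempty N
      · exact ⟨0, le_refl _, by norm_num⟩)
  have hPBne : PB.Nonempty := by
    rw [hPB]
    exact Set.univ_pi_nonempty_iff.mpr (fun i => by
      rw [hSB]; dsimp only; split
      · exact Dset_nonempty
      · exact ⟨0, rfl⟩)
  have hz : ∀ (s : Set ℝ), s + ({0} : Set ℝ) = s := fun s => by simp
  have hsum1 : PA + PB = Set.univ.pi (fun i => SA i + SB i) := pi_add SA SB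
  have hsum2 : PA + PB + PB = Set.univ.pi (fun i => (SA i + SB i) + SB i) := by
    rw [hsum1, pi_add]
  have hvPA : volume PA = 1 := by
    rw [hPA, volume_pi_pi]
    have : ∀ i : Fin n, volume (SA i) = 1 := fun i => by
      rw [hSA]; dsimp only; split
      · exact v1
      · rw [Real.volume_Icc]; norm_num
    simp [this]
  have hvPAB : volume (PA + PB) = volume (Aone N + Dset) := by
    rw [hsum1, volume_pi_pi]
    have hco : ∀ i : Fin n, volume (SA i + SB i)
        = if i = 0 then volume (Aone N + Dset) else 1 := fun i => by
      rw [hSA, hSB]; dsimp only; split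
      · rfl
      · rw [hz, Real.volume_Icc]; norm_num
    rw [Finset.prod_congr rfl (fun i _ => hco i)]
    simp [Finset.prod_ite_eq']
  have hvPABB : volume (PA + PB + PB) = volume (Aone N + Dset + Dset) := by
    rw [hsum2, volume_pi_pi]
    have hco : ∀ i : Fin n, volume (SA i + SB i + SB i)
        = if i = 0 then volume (Aone N + Dset + Dset) else 1 := fun i => by
      rw [hSA, hSB]; dsimp only; split
      · rfl
      · rw [hz, hz, Real.volume_Icc]; norm_num
    rw [Finset.prod_congr rfl (fun i _ => hco i)]
    simp [Finset.prod_ite_eq']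
  -- lift to EuclideanSpace
  set L := EuclideanSpace.equiv (Fin n) ℝ with hL
  have hvol : ∀ S : Set (Fin n → ℝ), MeasurableSet S → volume (L.symm '' S) = volume S := by
    intro S hS
    have hco : ⇑L.symm = ⇑(MeasurableEquiv.toLp 2 (Fin n → ℝ)).symm.symm := rfl
    rw [hco, MeasurableEquiv.image_symm]
    exact (EuclideanSpace.volume_preserving_symm_measurableEquiv_toLp (Fin n)).measure_preimage
      hS.nullMeasurableSet
  refine ⟨L.symm '' PA, L.symm '' PB, hPAne.image _, hPAc.image L.symm.continuous,
    hPBne.image _, hPBc.image L.symm.continuous, ?_⟩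
  rw [← Set.image_add L.symm, ← Set.image_add L.symm]
  rw [hvol PA hPAc.measurableSet, hvol _ (hPAc.add hPBc).measurableSet,
    hvol _ ((hPAc.add hPBc).add hPBc).measurableSet]
  rw [hvPA, hvPAB, hvPABB]
  have hfinAB : volume (Aone N + Dset) ≠ ⊤ := hABc.measure_lt_top.ne
  have hfinABB : volume (Aone N + Dset + Dset) ≠ ⊤ := hABBc.measure_lt_top.ne
  have ht1 : (volume (Aone N + Dset)).toReal ≤ 3/2 :=
    ENNReal.toReal_le_of_le_ofReal (by norm_num) v2
  have ht1' : 0 ≤ (volume (Aone N + Dset)).toReal := ENNReal.toReal_nonneg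
  have ht2 : (N:ℝ) ≤ (volume (Aone N + Dset + Dset)).toReal := by
    have := ENNReal.toReal_mono hfinABB v3
    rwa [ENNReal.toReal_ofReal (by positivity)] at this
  rw [ENNReal.toReal_one, one_mul]
  have hsq : (volume (Aone N + Dset)).toReal ^ 2 ≤ 9/4 := by nlinarith
  nlinarith
end
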